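/- arXiv:0910.0907 — 8 statements merged into one kernel-verified Lean document; each statement's English description precedes it below -/
import Mathlib

section
/- Let G₁, G₂, G₃ be compact Hausdorff topological groups and let M₁, M₂ ≤ G₁×G₂×G₃ be two closed subgroups, each having full two-dimensional projections (i.e. for each i ≠ j the projection of M_k onto G_i×G_j is all of G_i×G_j, for k = 1,2). For k = 1,2 and i = 1,2,3 let L_{k,i} be the one-dimensional slice of M_k in the i-th coordinate, e.g. L_{k,1} := {g ∈ G₁ : (g,1_{G₂},1_{G₃}) ∈ M_k}. Suppose Φ_i : G_i → G_i are topological group automorphisms and h_i, k_i ∈ G_i for i = 1,2,3 satisfy (h₁,h₂,h₃)·(Φ₁×Φ₂×Φ₃)(M₁)·(k₁,k₂,k₃) = M₂. Then Φ_i(L_{1,i}) = L_{2,i} for i = 1,2,3. -/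
private lemma aux_cancel {G : Type*} [Group G] {h a b : G}
    (hyp : h * a * (b⁻¹ * h⁻¹) = 1) : a = b := by
  have h2 : h * (a * b⁻¹) * h⁻¹ = 1 := by rw [← hyp]; group
  have h3 : a * b⁻¹ = 1 := by
    have := congrArg (fun z => h⁻¹ * z * h) h2
    simpa [mul_assoc] using this
  exact mul_inv_eq_one.mp h3

/-- **Lemma (deconstructing a relation between two group correspondences).**
Let `G₁, G₂, G₃` be compact Hausdorff groups, `M₁, M₂ ≤ G₁ × G₂ × G₃` closed subgroups with
full two-dimensional projections, `Φᵢ` topological automorphisms and `hᵢ, kᵢ ∈ Gᵢ` with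
`(h₁,h₂,h₃)·(Φ₁×Φ₂×Φ₃)(M₁)·(k₁,k₂,k₃) = M₂`.  Then `Φᵢ` carries the `i`-th one-dimensional
slice of `M₁` onto that of `M₂`. -/
theorem slices_respected_by_translated_automorphism_image
    {G₁ G₂ G₃ : Type}
    [Group G₁] [TopologicalSpace G₁] [IsTopologicalGroup G₁] [CompactSpace G₁] [T2Space G₁]
    [Group G₂] [TopologicalSpace G₂] [IsTopologicalGroup G₂] [CompactSpace G₂] [T2Space G₂]
    [Group G₃] [TopologicalSpace G₃] [IsTopologicalGroup G₃] [CompactSpace G₃] [T2Space G₃]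
    (M₁ M₂ : Subgroup (G₁ × G₂ × G₃))
    (hM₁closed : IsClosed (M₁ : Set (G₁ × G₂ × G₃)))
    (hM₂closed : IsClosed (M₂ : Set (G₁ × G₂ × G₃)))
    (hM₁f₁₂ : ∀ (g₁ : G₁) (g₂ : G₂), ∃ g₃ : G₃, (g₁, g₂, g₃) ∈ M₁)
    (hM₁f₁₃ : ∀ (g₁ : G₁) (g₃ : G₃), ∃ g₂ : G₂, (g₁, g₂, g₃) ∈ M₁)
    (hM₁f₂₃ : ∀ (g₂ : G₂) (g₃ : G₃), ∃ g₁ : G₁, (g₁, g₂, g₃) ∈ M₁)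
    (hM₂f₁₂ : ∀ (g₁ : G₁) (g₂ : G₂), ∃ g₃ : G₃, (g₁, g₂, g₃) ∈ M₂)
    (hM₂f₁₃ : ∀ (g₁ : G₁) (g₃ : G₃), ∃ g₂ : G₂, (g₁, g₂, g₃) ∈ M₂)
    (hM₂f₂₃ : ∀ (g₂ : G₂) (g₃ : G₃), ∃ g₁ : G₁, (g₁, g₂, g₃) ∈ M₂)
    (Φ₁ : G₁ ≃* G₁) (Φ₂ : G₂ ≃* G₂) (Φ₃ : G₃ ≃* G₃)
    (hΦ₁ : Continuous Φ₁) (hΦ₁' : Continuous Φ₁.symm)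
    (hΦ₂ : Continuous Φ₂) (hΦ₂' : Continuous Φ₂.symm)
    (hΦ₃ : Continuous Φ₃) (hΦ₃' : Continuous Φ₃.symm)
    (h₁ k₁ : G₁) (h₂ k₂ : G₂) (h₃ k₃ : G₃)
    (hrel :
      (fun p : G₁ × G₂ × G₃ => (h₁, h₂, h₃) * p * (k₁, k₂, k₃)) ''
          ((fun p : G₁ × G₂ × G₃ => (Φ₁ p.1, Φ₂ p.2.1, Φ₃ p.2.2)) '' (M₁ : Set (G₁ × G₂ × G₃)))
        = (M₂ : Set (G₁ × G₂ × G₃))) :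
    Φ₁ '' {g : G₁ | (g, 1, 1) ∈ M₁} = {g : G₁ | (g, 1, 1) ∈ M₂} ∧
      Φ₂ '' {g : G₂ | (1, g, 1) ∈ M₁} = {g : G₂ | (1, g, 1) ∈ M₂} ∧
      Φ₃ '' {g : G₃ | (1, 1, g) ∈ M₁} = {g : G₃ | (1, 1, g) ∈ M₂} := by
  classical
  -- Extract the element `x ∈ M₁` mapping to `1 ∈ M₂`.
  have h1 : (1 : G₁ × G₂ × G₃) ∈ (M₂ : Set (G₁ × G₂ × G₃)) := M₂.one_mem
  rw [← hrel] at h1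
  obtain ⟨_, ⟨x, hxM, rfl⟩, hx1⟩ := h1
  simp only [Prod.mk_mul_mk, Prod.ext_iff, Prod.fst_one, Prod.snd_one] at hx1
  obtain ⟨e1, e2, e3⟩ := hx1
  have hk₁ : k₁ = (Φ₁ x.1)⁻¹ * h₁⁻¹ := by
    have h := eq_inv_of_mul_eq_one_right e1
    rw [h, mul_inv_rev]
  have hk₂ : k₂ = (Φ₂ x.2.1)⁻¹ * h₂⁻¹ := by
    have h := eq_inv_of_mul_eq_one_right e2
    rw [h, mul_inv_rev]
  have hk₃ : k₃ = (Φ₃ x.2.2)⁻¹ * h₃⁻¹ := by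
    have h := eq_inv_of_mul_eq_one_right e3
    rw [h, mul_inv_rev]
  -- Normality of the images of the slices.
  have hnorm₁ : ∀ c : G₁, ∀ n ∈ Φ₁ '' {g : G₁ | (g, 1, 1) ∈ M₁},
      c * n * c⁻¹ ∈ Φ₁ '' {g : G₁ | (g, 1, 1) ∈ M₁} := by
    rintro c n ⟨a, ha, rfl⟩
    obtain ⟨g₃, hg⟩ := hM₁f₁₂ (Φ₁.symm c) 1
    refine ⟨Φ₁.symm c * a * (Φ₁.symm c)⁻¹, ?_, by simp [map_mul]⟩
    have := M₁.mul_mem (M₁.mul_mem hg ha) (M₁.inv_mem hg)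
    simpa [Prod.mk_mul_mk, mul_assoc] using this
  have hnorm₂ : ∀ c : G₂, ∀ n ∈ Φ₂ '' {g : G₂ | (1, g, 1) ∈ M₁},
      c * n * c⁻¹ ∈ Φ₂ '' {g : G₂ | (1, g, 1) ∈ M₁} := by
    rintro c n ⟨a, ha, rfl⟩
    obtain ⟨g₁, hg⟩ := hM₁f₂₃ (Φ₂.symm c) 1
    refine ⟨Φ₂.symm c * a * (Φ₂.symm c)⁻¹, ?_, by simp [map_mul]⟩
    have := M₁.mul_mem (M₁.mul_mem hg ha) (M₁.inv_mem hg)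
    simpa [Prod.mk_mul_mk, mul_assoc] using this
  have hnorm₃ : ∀ c : G₃, ∀ n ∈ Φ₃ '' {g : G₃ | (1, 1, g) ∈ M₁},
      c * n * c⁻¹ ∈ Φ₃ '' {g : G₃ | (1, 1, g) ∈ M₁} := by
    rintro c n ⟨a, ha, rfl⟩
    obtain ⟨g₂, hg⟩ := hM₁f₁₃ 1 (Φ₃.symm c)
    refine ⟨Φ₃.symm c * a * (Φ₃.symm c)⁻¹, ?_, by simp [map_mul]⟩
    have := M₁.mul_mem (M₁.mul_mem hg ha) (M₁.inv_mem hg)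
    simpa [Prod.mk_mul_mk, mul_assoc] using this
  -- Membership characterizations of the slices of `M₂`.
  have mem₁ : ∀ g : G₁, (g, (1 : G₂), (1 : G₃)) ∈ M₂ ↔
      ∃ a : G₁, (a, (1 : G₂), (1 : G₃)) ∈ M₁ ∧ g = h₁ * Φ₁ a * h₁⁻¹ := by
    intro g
    constructor
    · intro hg
      have hg' : (g, (1 : G₂), (1 : G₃)) ∈ (M₂ : Set (G₁ × G₂ × G₃)) := hg
      rw [← hrel] at hg'
      obtain ⟨_, ⟨m, hmM, rfl⟩, hEq⟩ := hg'
      simp only [Prod.mk_mul_mk, Prod.mk.injEq] at hEq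
      obtain ⟨f1, f2, f3⟩ := hEq
      have hm2 : m.2.1 = x.2.1 := by
        rw [hk₂] at f2
        exact Φ₂.injective (aux_cancel f2)
      have hm3 : m.2.2 = x.2.2 := by
        rw [hk₃] at f3
        exact Φ₃.injective (aux_cancel f3)
      refine ⟨m.1 * x.1⁻¹, ?_, ?_⟩
      · have hmx : m * x⁻¹ ∈ M₁ := M₁.mul_mem hmM (M₁.inv_mem hxM)
        have hform : m * x⁻¹ = (m.1 * x.1⁻¹, (1 : G₂), (1 : G₃)) := by
          have : m = (m.1, m.2.1, m.2.2) := rfl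
          have hx' : x = (x.1, x.2.1, x.2.2) := rfl
          rw [this, hx', hm2, hm3]
          simp [Prod.ext_iff]
        rwa [hform] at hmx
      · rw [← f1, hk₁, map_mul, map_inv]
        group
    · rintro ⟨a, ha, rfl⟩
      have : (h₁ * Φ₁ a * h₁⁻¹, (1 : G₂), (1 : G₃)) ∈ (M₂ : Set (G₁ × G₂ × G₃)) := by
        rw [← hrel]
        refine ⟨_, ⟨(a, 1, 1) * x, M₁.mul_mem ha hxM, rfl⟩, ?_⟩
        simp only [Prod.mk_mul_mk, Prod.fst_mul, Prod.snd_mul, Prod.ext_iff, map_mul, map_one,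
          one_mul, hk₁, hk₂, hk₃]
        refine ⟨by group, by group, by group⟩
      exact this
  have mem₂ : ∀ g : G₂, ((1 : G₁), g, (1 : G₃)) ∈ M₂ ↔
      ∃ a : G₂, ((1 : G₁), a, (1 : G₃)) ∈ M₁ ∧ g = h₂ * Φ₂ a * h₂⁻¹ := by
    intro g
    constructor
    · intro hg
      have hg' : ((1 : G₁), g, (1 : G₃)) ∈ (M₂ : Set (G₁ × G₂ × G₃)) := hg
      rw [← hrel] at hg'
      obtain ⟨_, ⟨m, hmM, rfl⟩, hEq⟩ := hg'
      simp only [Prod.mk_mul_mk, Prod.mk.injEq] at hEq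
      obtain ⟨f1, f2, f3⟩ := hEq
      have hm1 : m.1 = x.1 := by
        rw [hk₁] at f1
        exact Φ₁.injective (aux_cancel f1)
      have hm3 : m.2.2 = x.2.2 := by
        rw [hk₃] at f3
        exact Φ₃.injective (aux_cancel f3)
      refine ⟨m.2.1 * x.2.1⁻¹, ?_, ?_⟩
      · have hmx : m * x⁻¹ ∈ M₁ := M₁.mul_mem hmM (M₁.inv_mem hxM)
        have hform : m * x⁻¹ = ((1 : G₁), m.2.1 * x.2.1⁻¹, (1 : G₃)) := by
          have : m = (m.1, m.2.1, m.2.2) := rfl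
          have hx' : x = (x.1, x.2.1, x.2.2) := rfl
          rw [this, hx', hm1, hm3]
          simp [Prod.ext_iff]
        rwa [hform] at hmx
      · rw [← f2, hk₂, map_mul, map_inv]
        group
    · rintro ⟨a, ha, rfl⟩
      have : ((1 : G₁), h₂ * Φ₂ a * h₂⁻¹, (1 : G₃)) ∈ (M₂ : Set (G₁ × G₂ × G₃)) := by
        rw [← hrel]
        refine ⟨_, ⟨(1, a, 1) * x, M₁.mul_mem ha hxM, rfl⟩, ?_⟩
        simp only [Prod.mk_mul_mk, Prod.fst_mul, Prod.snd_mul, Prod.ext_iff, map_mul, map_one,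
          one_mul, hk₁, hk₂, hk₃]
        refine ⟨by group, by group, by group⟩
      exact this
  have mem₃ : ∀ g : G₃, ((1 : G₁), (1 : G₂), g) ∈ M₂ ↔
      ∃ a : G₃, ((1 : G₁), (1 : G₂), a) ∈ M₁ ∧ g = h₃ * Φ₃ a * h₃⁻¹ := by
    intro g
    constructor
    · intro hg
      have hg' : ((1 : G₁), (1 : G₂), g) ∈ (M₂ : Set (G₁ × G₂ × G₃)) := hg
      rw [← hrel] at hg'
      obtain ⟨_, ⟨m, hmM, rfl⟩, hEq⟩ := hg'
      simp only [Prod.mk_mul_mk, Prod.mk.injEq] at hEq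
      obtain ⟨f1, f2, f3⟩ := hEq
      have hm1 : m.1 = x.1 := by
        rw [hk₁] at f1
        exact Φ₁.injective (aux_cancel f1)
      have hm2 : m.2.1 = x.2.1 := by
        rw [hk₂] at f2
        exact Φ₂.injective (aux_cancel f2)
      refine ⟨m.2.2 * x.2.2⁻¹, ?_, ?_⟩
      · have hmx : m * x⁻¹ ∈ M₁ := M₁.mul_mem hmM (M₁.inv_mem hxM)
        have hform : m * x⁻¹ = ((1 : G₁), (1 : G₂), m.2.2 * x.2.2⁻¹) := by
          have : m = (m.1, m.2.1, m.2.2) := rfl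
          have hx' : x = (x.1, x.2.1, x.2.2) := rfl
          rw [this, hx', hm1, hm2]
          simp [Prod.ext_iff]
        rwa [hform] at hmx
      · rw [← f3, hk₃, map_mul, map_inv]
        group
    · rintro ⟨a, ha, rfl⟩
      have : ((1 : G₁), (1 : G₂), h₃ * Φ₃ a * h₃⁻¹) ∈ (M₂ : Set (G₁ × G₂ × G₃)) := by
        rw [← hrel]
        refine ⟨_, ⟨(1, 1, a) * x, M₁.mul_mem ha hxM, rfl⟩, ?_⟩
        simp only [Prod.mk_mul_mk, Prod.fst_mul, Prod.snd_mul, Prod.ext_iff, map_mul, map_one,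
          one_mul, hk₁, hk₂, hk₃]
        refine ⟨by group, by group, by group⟩
      exact this
  refine ⟨?_, ?_, ?_⟩
  · ext g
    constructor
    · intro hg
      have := hnorm₁ h₁⁻¹ g hg
      rw [inv_inv] at this
      obtain ⟨a, ha, haeq⟩ := this
      refine (mem₁ g).mpr ⟨a, ha, ?_⟩
      rw [haeq]; group
    · intro hg
      obtain ⟨a, ha, rfl⟩ := (mem₁ g).mp hg
      exact hnorm₁ h₁ (Φ₁ a) ⟨a, ha, rfl⟩
  · ext g
    constructor
    · intro hg
      have := hnorm₂ h₂⁻¹ g hg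
      rw [inv_inv] at this
      obtain ⟨a, ha, haeq⟩ := this
      refine (mem₂ g).mpr ⟨a, ha, ?_⟩
      rw [haeq]; group
    · intro hg
      obtain ⟨a, ha, rfl⟩ := (mem₂ g).mp hg
      exact hnorm₂ h₂ (Φ₂ a) ⟨a, ha, rfl⟩
  · ext g
    constructor
    · intro hg
      have := hnorm₃ h₃⁻¹ g hg
      rw [inv_inv] at this
      obtain ⟨a, ha, haeq⟩ := this
      refine (mem₃ g).mpr ⟨a, ha, ?_⟩
      rw [haeq]; group
    · intro hg
      obtain ⟨a, ha, rfl⟩ := (mem₃ g).mp hg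
      exact hnorm₃ h₃ (Φ₃ a) ⟨a, ha, rfl⟩
end

section
/- Let A be a compact abelian group and for i = 1,2 let Θ_{i,1}, Θ_{i,2}, Θ_{i,3} be topological group automorphisms of A, and set M_i := {(a₁,a₂,a₃) ∈ A³ : Θ_{i,1}(a₁)·Θ_{i,2}(a₂)·Θ_{i,3}(a₃) = 1_A} (these subgroups have full two-dimensional projections and trivial one-dimensional slices). Suppose Φ₁, Φ₂, Φ₃ are topological group automorphisms of A and (b₁,b₂,b₃) ∈ A³ satisfy (b₁,b₂,b₃)·(Φ₁×Φ₂×Φ₃)(M₁) = M₂. Then Θ_{1,1}∘Φ₁^{-1}∘Θ_{2,1}^{-1} = Θ_{1,2}∘Φ₂^{-1}∘Θ_{2,2}^{-1} = Θ_{1,3}∘Φ₃^{-1}∘Θ_{2,3}^{-1} as automorphisms of A. -/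
/-- **Lemma (equal twisted Mackey groups give equal twisting isomorphisms).**
Let `A` be a compact abelian group, `Θᵢⱼ` topological automorphisms of `A`, and
`Mᵢ = {(a₁,a₂,a₃) ∈ A³ | Θᵢ₁(a₁)Θᵢ₂(a₂)Θᵢ₃(a₃) = 1}`.  If automorphisms `Φ₁, Φ₂, Φ₃` and
`(b₁,b₂,b₃) ∈ A³` satisfy `(b₁,b₂,b₃)·(Φ₁×Φ₂×Φ₃)(M₁) = M₂`, then
`Θ₁₁∘Φ₁⁻¹∘Θ₂₁⁻¹ = Θ₁₂∘Φ₂⁻¹∘Θ₂₂⁻¹ = Θ₁₃∘Φ₃⁻¹∘Θ₂₃⁻¹`. -/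
theorem equal_translated_twisted_zero_sum_groups_to_equal_isos
    {A : Type} [CommGroup A] [TopologicalSpace A] [IsTopologicalGroup A]
    [CompactSpace A] [T2Space A]
    (Θ₁₁ Θ₁₂ Θ₁₃ Θ₂₁ Θ₂₂ Θ₂₃ : A ≃* A)
    (hΘ₁₁ : Continuous Θ₁₁) (hΘ₁₁' : Continuous Θ₁₁.symm)
    (hΘ₁₂ : Continuous Θ₁₂) (hΘ₁₂' : Continuous Θ₁₂.symm)
    (hΘ₁₃ : Continuous Θ₁₃) (hΘ₁₃' : Continuous Θ₁₃.symm)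
    (hΘ₂₁ : Continuous Θ₂₁) (hΘ₂₁' : Continuous Θ₂₁.symm)
    (hΘ₂₂ : Continuous Θ₂₂) (hΘ₂₂' : Continuous Θ₂₂.symm)
    (hΘ₂₃ : Continuous Θ₂₃) (hΘ₂₃' : Continuous Θ₂₃.symm)
    (Φ₁ Φ₂ Φ₃ : A ≃* A)
    (hΦ₁ : Continuous Φ₁) (hΦ₁' : Continuous Φ₁.symm)
    (hΦ₂ : Continuous Φ₂) (hΦ₂' : Continuous Φ₂.symm)
    (hΦ₃ : Continuous Φ₃) (hΦ₃' : Continuous Φ₃.symm)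
    (b₁ b₂ b₃ : A)
    (hrel :
      (fun p : A × A × A => (b₁, b₂, b₃) * p) ''
          ((fun p : A × A × A => (Φ₁ p.1, Φ₂ p.2.1, Φ₃ p.2.2)) ''
            {p : A × A × A | Θ₁₁ p.1 * Θ₁₂ p.2.1 * Θ₁₃ p.2.2 = 1})
        = {p : A × A × A | Θ₂₁ p.1 * Θ₂₂ p.2.1 * Θ₂₃ p.2.2 = 1}) :
    (∀ a : A, Θ₁₁ (Φ₁.symm (Θ₂₁.symm a)) = Θ₁₂ (Φ₂.symm (Θ₂₂.symm a))) ∧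
      ∀ a : A, Θ₁₂ (Φ₂.symm (Θ₂₂.symm a)) = Θ₁₃ (Φ₃.symm (Θ₂₃.symm a)) := by

  -- Membership equivalence derived from the set equality `hrel`.
  have key : ∀ a₁ a₂ a₃ : A, (Θ₁₁ a₁ * Θ₁₂ a₂ * Θ₁₃ a₃ = 1) ↔
      (Θ₂₁ (b₁ * Φ₁ a₁) * Θ₂₂ (b₂ * Φ₂ a₂) * Θ₂₃ (b₃ * Φ₃ a₃) = 1) := by
    intro a₁ a₂ a₃
    constructor
    · intro h
      have hmem : (b₁ * Φ₁ a₁, b₂ * Φ₂ a₂, b₃ * Φ₃ a₃) ∈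
          {p : A × A × A | Θ₂₁ p.1 * Θ₂₂ p.2.1 * Θ₂₃ p.2.2 = 1} := by
        rw [← hrel]
        exact ⟨(Φ₁ a₁, Φ₂ a₂, Φ₃ a₃), ⟨(a₁, a₂, a₃), h, rfl⟩, rfl⟩
      exact hmem
    · intro h
      have hmem : (b₁ * Φ₁ a₁, b₂ * Φ₂ a₂, b₃ * Φ₃ a₃) ∈
          (fun p : A × A × A => (b₁, b₂, b₃) * p) ''
            ((fun p : A × A × A => (Φ₁ p.1, Φ₂ p.2.1, Φ₃ p.2.2)) ''
              {p : A × A × A | Θ₁₁ p.1 * Θ₁₂ p.2.1 * Θ₁₃ p.2.2 = 1}) := by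
        rw [hrel]; exact h
      obtain ⟨q, ⟨p, hp, hq⟩, hbq⟩ := hmem
      subst hq
      have h1 : b₁ * Φ₁ p.1 = b₁ * Φ₁ a₁ := congrArg Prod.fst hbq
      have h2 : b₂ * Φ₂ p.2.1 = b₂ * Φ₂ a₂ := congrArg (fun x => x.2.1) hbq
      have h3 : b₃ * Φ₃ p.2.2 = b₃ * Φ₃ a₃ := congrArg (fun x => x.2.2) hbq
      have e1 : p.1 = a₁ := Φ₁.injective (mul_left_cancel h1)
      have e2 : p.2.1 = a₂ := Φ₂.injective (mul_left_cancel h2)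
      have e3 : p.2.2 = a₃ := Φ₃.injective (mul_left_cancel h3)
      simpa only [Set.mem_setOf_eq, e1, e2, e3] using hp
  have hc : Θ₂₁ b₁ * Θ₂₂ b₂ * Θ₂₃ b₃ = 1 := by
    have := (key 1 1 1).mp (by simp)
    simpa using this
  have key2 : ∀ a₁ a₂ a₃ : A, (Θ₁₁ a₁ * Θ₁₂ a₂ * Θ₁₃ a₃ = 1) ↔
      (Θ₂₁ (Φ₁ a₁) * Θ₂₂ (Φ₂ a₂) * Θ₂₃ (Φ₃ a₃) = 1) := by
    intro a₁ a₂ a₃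
    rw [key a₁ a₂ a₃]
    constructor
    · intro h
      have : (Θ₂₁ b₁ * Θ₂₂ b₂ * Θ₂₃ b₃) * (Θ₂₁ (Φ₁ a₁) * Θ₂₂ (Φ₂ a₂) * Θ₂₃ (Φ₃ a₃)) = 1 := by
        rw [← h]; simp only [map_mul]; ac_rfl
      rwa [hc, one_mul] at this
    · intro h
      simp only [map_mul]
      calc Θ₂₁ b₁ * Θ₂₁ (Φ₁ a₁) * (Θ₂₂ b₂ * Θ₂₂ (Φ₂ a₂)) * (Θ₂₃ b₃ * Θ₂₃ (Φ₃ a₃))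
          = (Θ₂₁ b₁ * Θ₂₂ b₂ * Θ₂₃ b₃) * (Θ₂₁ (Φ₁ a₁) * Θ₂₂ (Φ₂ a₂) * Θ₂₃ (Φ₃ a₃)) := by ac_rfl
        _ = 1 := by rw [hc, h, one_mul]
  constructor
  · intro a
    have h := (key2 (Φ₁.symm (Θ₂₁.symm a)) (Φ₂.symm (Θ₂₂.symm a))⁻¹ 1).mpr (by simp)
    have : Θ₁₁ (Φ₁.symm (Θ₂₁.symm a)) * (Θ₁₂ (Φ₂.symm (Θ₂₂.symm a)))⁻¹ = 1 := by
      simpa using h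
    exact mul_inv_eq_one.mp this
  · intro a
    have h := (key2 1 (Φ₂.symm (Θ₂₂.symm a)) (Φ₃.symm (Θ₂₃.symm a))⁻¹).mpr (by simp)
    have : Θ₁₂ (Φ₂.symm (Θ₂₂.symm a)) * (Θ₁₃ (Φ₃.symm (Θ₂₃.symm a)))⁻¹ = 1 := by
      simpa using h
    exact mul_inv_eq_one.mp this
end

section
/- Let A be a compact abelian group and for i = 1,2 let Θ_{i,1}, Θ_{i,2}, Θ_{i,3} be topological group automorphisms of A, and set M_i := {(a₁,a₂,a₃) ∈ A³ : Θ_{i,1}(a₁)·Θ_{i,2}(a₂)·Θ_{i,3}(a₃) = 1_A}. Then M₁ = M₂ if and only if Θ_{1,1}∘Θ_{2,1}^{-1} = Θ_{1,2}∘Θ_{2,2}^{-1} = Θ_{1,3}∘Θ_{2,3}^{-1} as automorphisms of A. -/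
/-- **Lemma (when the twisted zero-sum subgroups are equal).**
Let `A` be a compact abelian group, `Θᵢⱼ` topological automorphisms of `A`, and
`Mᵢ = {(a₁,a₂,a₃) ∈ A³ | Θᵢ₁(a₁)Θᵢ₂(a₂)Θᵢ₃(a₃) = 1}`.  Then `M₁ = M₂` if and only if
`Θ₁₁∘Θ₂₁⁻¹ = Θ₁₂∘Θ₂₂⁻¹ = Θ₁₃∘Θ₂₃⁻¹`. -/
theorem twisted_zero_sum_groups_equal_iff
    {A : Type} [CommGroup A] [TopologicalSpace A] [IsTopologicalGroup A]
    [CompactSpace A] [T2Space A]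
    (Θ₁₁ Θ₁₂ Θ₁₃ Θ₂₁ Θ₂₂ Θ₂₃ : A ≃* A)
    (hΘ₁₁ : Continuous Θ₁₁) (hΘ₁₁' : Continuous Θ₁₁.symm)
    (hΘ₁₂ : Continuous Θ₁₂) (hΘ₁₂' : Continuous Θ₁₂.symm)
    (hΘ₁₃ : Continuous Θ₁₃) (hΘ₁₃' : Continuous Θ₁₃.symm)
    (hΘ₂₁ : Continuous Θ₂₁) (hΘ₂₁' : Continuous Θ₂₁.symm)
    (hΘ₂₂ : Continuous Θ₂₂) (hΘ₂₂' : Continuous Θ₂₂.symm)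
    (hΘ₂₃ : Continuous Θ₂₃) (hΘ₂₃' : Continuous Θ₂₃.symm) :
    ({p : A × A × A | Θ₁₁ p.1 * Θ₁₂ p.2.1 * Θ₁₃ p.2.2 = 1}
        = {p : A × A × A | Θ₂₁ p.1 * Θ₂₂ p.2.1 * Θ₂₃ p.2.2 = 1})
      ↔ ((∀ a : A, Θ₁₁ (Θ₂₁.symm a) = Θ₁₂ (Θ₂₂.symm a)) ∧
          ∀ a : A, Θ₁₂ (Θ₂₂.symm a) = Θ₁₃ (Θ₂₃.symm a)) := by
  constructor
  · intro h
    constructor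
    · intro a
      have h1 : (Θ₂₁.symm a, Θ₂₂.symm a⁻¹, (1 : A)) ∈
          {p : A × A × A | Θ₂₁ p.1 * Θ₂₂ p.2.1 * Θ₂₃ p.2.2 = 1} := by
        simp
      rw [← h] at h1
      simp only [Set.mem_setOf_eq, map_one, mul_one, map_inv] at h1
      exact eq_of_mul_inv_eq_one (by simpa using h1)
    · intro a
      have h1 : ((1 : A), Θ₂₂.symm a, Θ₂₃.symm a⁻¹) ∈
          {p : A × A × A | Θ₂₁ p.1 * Θ₂₂ p.2.1 * Θ₂₃ p.2.2 = 1} := by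
        simp
      rw [← h] at h1
      simp only [Set.mem_setOf_eq, map_one, one_mul, map_inv] at h1
      exact eq_of_mul_inv_eq_one (by simpa using h1)
  · rintro ⟨h1, h2⟩
    set ψ : A ≃* A := Θ₂₁.symm.trans Θ₁₁ with hψ
    have e1 : ∀ a : A, Θ₁₁ a = ψ (Θ₂₁ a) := by intro a; simp [hψ]
    have e2 : ∀ a : A, Θ₁₂ a = ψ (Θ₂₂ a) := by
      intro a
      have := h1 (Θ₂₂ a)
      simp only [hψ, MulEquiv.trans_apply]
      rw [this]; simp
    have e3 : ∀ a : A, Θ₁₃ a = ψ (Θ₂₃ a) := by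
      intro a
      have := (h1 (Θ₂₃ a)).trans (h2 (Θ₂₃ a))
      simp only [hψ, MulEquiv.trans_apply]
      rw [this]; simp
    ext p
    simp only [Set.mem_setOf_eq, e1, e2, e3, ← map_mul]
    constructor
    · intro hp
      have := ψ.injective (hp.trans (map_one ψ).symm)
      exact this
    · intro hp; rw [hp, map_one]
end

section
/- Let Z be a compact Hausdorff abelian group, φ : ℤ² → Z a group homomorphism, and p₁, p₂, p₃ ∈ ℤ². For i ≠ j set K_{ij} := the closure of φ(ℤ(p_i − p_j)) in Z, and define Z⃗ := {(z₁,z₂,z₃) ∈ Z³ : z_i·K_{ij} = z_j·K_{ij} for all i ≠ j}. Then for every u ∈ K_{13} there exists u₂ ∈ Z such that (u, u₂, 1_Z) ∈ Z⃗. -/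
open scoped Pointwise

/-- The closure of the `φ`-image of the cyclic subgroup of `ℤ²` generated by `d`. -/
def orbitClosure {Z : Type} [CommGroup Z] [TopologicalSpace Z]
    (φ : ℤ × ℤ → Z) (d : ℤ × ℤ) : Set Z :=
  closure (Set.range fun n : ℤ => φ (n • d))

/-- The subgroup whose closure is `orbitClosure`. -/
def orbitSubgroup {Z : Type} [CommGroup Z]
    (φ : ℤ × ℤ → Z) (hφ : ∀ a b : ℤ × ℤ, φ (a + b) = φ a * φ b)
    (d : ℤ × ℤ) : Subgroup Z where
  carrier := Set.range fun n : ℤ => φ (n • d)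
  one_mem' := ⟨0, by
    have h := hφ 0 0
    simp only [add_zero] at h
    have h0 : φ 0 = 1 := (left_eq_mul.mp h)
    simpa using h0⟩
  mul_mem' := by
    rintro a b ⟨m, rfl⟩ ⟨n, rfl⟩
    exact ⟨m + n, by simp only []; rw [add_smul, hφ]⟩
  inv_mem' := by
    rintro a ⟨m, rfl⟩
    refine ⟨-m, ?_⟩
    have h := hφ (m • d) (-(m • d))
    simp only [add_neg_cancel] at h
    have h0 : φ 0 = 1 := by
      have h1 := hφ 0 0
      simp only [add_zero] at h1
      exact left_eq_mul.mp h1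
    rw [h0] at h
    simp only []
    rw [neg_smul]
    exact eq_inv_of_mul_eq_one_right h.symm

/-- **Lemma (lifting an element of `K₁₃` into the Furstenberg subgroup).**
Let `Z` be a compact Hausdorff abelian group, `φ : ℤ² → Z` a homomorphism, and
`p₁, p₂, p₃ ∈ ℤ²`.  With `K_{ij}` the closure of `φ(ℤ(pᵢ − pⱼ))` and
`Z⃗ = {(z₁,z₂,z₃) : zᵢK_{ij} = zⱼK_{ij} ∀ i ≠ j}`, every `u ∈ K₁₃` admits `u₂ ∈ Z` with
`(u, u₂, 1) ∈ Z⃗`. -/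
theorem lift_into_Furstenberg_subgroup
    {Z : Type} [CommGroup Z] [TopologicalSpace Z] [IsTopologicalGroup Z]
    [CompactSpace Z] [T2Space Z]
    (φ : ℤ × ℤ → Z) (hφ : ∀ a b : ℤ × ℤ, φ (a + b) = φ a * φ b)
    (p₁ p₂ p₃ : ℤ × ℤ) :
    ∀ u ∈ orbitClosure φ (p₁ - p₃), ∃ u₂ : Z,
      u • orbitClosure φ (p₁ - p₂) = u₂ • orbitClosure φ (p₁ - p₂) ∧
      u • orbitClosure φ (p₁ - p₃) = (1 : Z) • orbitClosure φ (p₁ - p₃) ∧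
      u₂ • orbitClosure φ (p₂ - p₃) = (1 : Z) • orbitClosure φ (p₂ - p₃) := by
  intro u hu
  set K : (ℤ × ℤ) → Subgroup Z := fun d => (orbitSubgroup φ hφ d).topologicalClosure with hK
  have hKset : ∀ d, orbitClosure φ d = (K d : Set Z) := fun d => rfl
  -- K₁₃ ⊆ K₁₂ * K₂₃ as sets
  have hclosed : ∀ d, IsClosed (K d : Set Z) := fun d => isClosed_closure
  have hcompact : ∀ d, IsCompact (K d : Set Z) := fun d => (hclosed d).isCompact
  have hprodclosed : IsClosed ((K (p₁ - p₂) : Set Z) * (K (p₂ - p₃) : Set Z)) :=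
    ((hcompact _).mul (hcompact _)).isClosed
  have hsub : orbitClosure φ (p₁ - p₃) ⊆ (K (p₁ - p₂) : Set Z) * (K (p₂ - p₃) : Set Z) := by
    apply closure_minimal _ hprodclosed
    rintro x ⟨n, rfl⟩
    refine ⟨φ (n • (p₁ - p₂)), subset_closure ⟨n, rfl⟩, φ (n • (p₂ - p₃)), subset_closure ⟨n, rfl⟩, ?_⟩
    simp only []
    rw [← hφ, ← smul_add]
    congr 2
    abel
  obtain ⟨a, ha, b, hb, hab⟩ := hsub hu
  refine ⟨b, ?_, ?_, ?_⟩
  · rw [hKset, leftCoset_eq_iff]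
    simp only [] at hab
    have : u⁻¹ * b = a⁻¹ := by rw [← hab, mul_inv, inv_mul_cancel_right]
    rw [this]
    exact (K (p₁ - p₂)).inv_mem ha
  · rw [hKset, leftCoset_eq_iff]
    simpa using (K (p₁ - p₃)).inv_mem hu
  · rw [hKset, leftCoset_eq_iff]
    simpa using (K (p₂ - p₃)).inv_mem hb
end

section
/- Let Z be a compact Hausdorff abelian group and φ : ℤ² → Z a homomorphism with the DIO property, and let n₁, n₂ ∈ ℤ² be linearly independent. Let K_i denote the closure of φ(ℤn_i) in Z and q : Z → Z/K₂ the quotient homomorphism. Then q restricts to a topological group isomorphism from K₁ onto the subgroup (K₁·K₂)/K₂ of Z/K₂; consequently q maps each coset z·K₁ of K₁ in Z bijectively onto the corresponding coset of (K₁·K₂)/K₂ in Z/K₂, so that the factor map q from the rotation system (Z, Haar, R_{φ(n₁)}) to the quotient rotation system (Z/K₂, Haar, R_{q(φ(n₁))}) is a relatively invariant extension (it maps each ergodic component of R_{φ(n₁)}, namely each coset of K₁, isomorphically onto its image). -/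
/-- The closed subgroup generated by the `φ`-orbit of direction `n`:
the topological closure of `φ(ℤn)`. -/
def dirClosure {Z : Type} [AddCommGroup Z] [TopologicalSpace Z] [IsTopologicalAddGroup Z]
    (φ : (ℤ × ℤ) →+ Z) (n : ℤ × ℤ) : AddSubgroup Z :=
  ((AddSubgroup.zmultiples n).map φ).topologicalClosure

/-- **Corollary (DIO gives relatively invariant quotient extensions).**
Let `Z` be a compact Hausdorff abelian group and `φ : ℤ² → Z` a homomorphism with the DIO
property, and let `n₁, n₂ ∈ ℤ²` be linearly independent.  With `Kᵢ` the closure of `φ(ℤnᵢ)`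
and `q : Z → Z/K₂` the quotient map, `q` restricts to a topological group isomorphism of
`K₁` onto `(K₁·K₂)/K₂`, and maps every coset `z + K₁` bijectively onto its image coset. -/
theorem DIO_quotient_relatively_invariant
    {Z : Type} [AddCommGroup Z] [TopologicalSpace Z] [IsTopologicalAddGroup Z]
    [CompactSpace Z] [T2Space Z]
    (φ : (ℤ × ℤ) →+ Z)
    (hDIO : ∀ Γ₁ Γ₂ : AddSubgroup (ℤ × ℤ), Γ₁ ⊓ Γ₂ = ⊥ →
      (Γ₁.map φ).topologicalClosure ⊓ (Γ₂.map φ).topologicalClosure = ⊥)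
    (n₁ n₂ : ℤ × ℤ)
    (hindep : ∀ a b : ℤ, a • n₁ + b • n₂ = 0 → a = 0 ∧ b = 0) :
    (∃ e : ↥(dirClosure φ n₁) ≃+
        ↥(AddSubgroup.map (QuotientAddGroup.mk' (dirClosure φ n₂)) (dirClosure φ n₁)),
      Continuous e ∧ Continuous e.symm ∧
        ∀ k : ↥(dirClosure φ n₁),
          (e k : Z ⧸ dirClosure φ n₂) = QuotientAddGroup.mk' (dirClosure φ n₂) ↑k) ∧
    ∀ z : Z, Set.BijOn (QuotientAddGroup.mk' (dirClosure φ n₂))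
        ((fun k => z + k) '' (dirClosure φ n₁ : Set Z))
        ((fun w => QuotientAddGroup.mk' (dirClosure φ n₂) z + w) ''
          (QuotientAddGroup.mk' (dirClosure φ n₂) '' (dirClosure φ n₁ : Set Z))) := by

  classical
  set K₁ := dirClosure φ n₁ with hK₁def
  set K₂ := dirClosure φ n₂ with hK₂def
  -- trivial intersection of the two closed subgroups
  have hK : K₁ ⊓ K₂ = ⊥ := by
    apply hDIO
    rw [eq_bot_iff]
    rintro x ⟨hx1, hx2⟩
    obtain ⟨a, ha⟩ := AddSubgroup.mem_zmultiples_iff.mp hx1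
    obtain ⟨b, hb⟩ := AddSubgroup.mem_zmultiples_iff.mp hx2
    have : a • n₁ + (-b) • n₂ = 0 := by
      rw [neg_smul, ha, hb]; abel
    obtain ⟨haz, _⟩ := hindep a (-b) this
    simp [haz] at ha
    simp [AddSubgroup.mem_bot, ← ha]
  have hKinj : ∀ x : Z, x ∈ K₁ → x ∈ K₂ → x = 0 := by
    intro x h1 h2
    have : x ∈ K₁ ⊓ K₂ := ⟨h1, h2⟩
    rwa [hK, AddSubgroup.mem_bot] at this
  have hclosed₂ : IsClosed (K₂ : Set Z) := AddSubgroup.isClosed_topologicalClosure _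
  haveI : IsClosed (K₂ : Set Z) := hclosed₂
  have hclosed₁ : IsClosed (K₁ : Set Z) := AddSubgroup.isClosed_topologicalClosure _
  haveI : CompactSpace ↥K₁ := isCompact_iff_compactSpace.mp (hclosed₁.isCompact)
  set q := QuotientAddGroup.mk' K₂ with hqdef
  have hqc : Continuous q := continuous_quot_mk
  -- the restricted hom
  set f : ↥K₁ →+ ↥(AddSubgroup.map q K₁) :=
    AddMonoidHom.codRestrict (q.comp K₁.subtype) (AddSubgroup.map q K₁)
      (fun k => ⟨(k : Z), k.2, rfl⟩) with hfdef
  have hfval : ∀ k : ↥K₁, ((f k : Z ⧸ K₂)) = q (k : Z) := fun k => rfl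
  have hinj : Function.Injective f := by
    intro a b hab
    have : q (a : Z) = q (b : Z) := by
      have := congrArg (Subtype.val) hab
      simpa [hfval] using this
    have hsub : (a : Z) - (b : Z) ∈ K₂ := (QuotientAddGroup.eq_iff_sub_mem ..).mp this
    have hsub1 : (a : Z) - (b : Z) ∈ K₁ := sub_mem a.2 b.2
    have := hKinj _ hsub1 hsub
    exact Subtype.ext (sub_eq_zero.mp this)
  have hsurj : Function.Surjective f := by
    rintro ⟨w, k, hk, rfl⟩
    exact ⟨⟨k, hk⟩, rfl⟩
  set e : ↥K₁ ≃+ ↥(AddSubgroup.map q K₁) := AddEquiv.ofBijective f ⟨hinj, hsurj⟩ with hedef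
  have heval : ∀ k : ↥K₁, ((e k : Z ⧸ K₂)) = q (k : Z) := fun k => rfl
  have hec : Continuous e := by
    apply Continuous.subtype_mk
    exact hqc.comp continuous_subtype_val
  have hsc : Continuous (⇑e.symm) :=
    (hec.homeoOfEquivCompactToT2 (f := e.toEquiv)).symm.continuous
  constructor
  · exact ⟨e, hec, hsc, heval⟩
  · intro z
    refine ⟨?_, ?_, ?_⟩
    · rintro _ ⟨k, hk, rfl⟩
      exact ⟨q k, ⟨k, hk, rfl⟩, by simp [map_add]⟩
    · rintro _ ⟨k, hk, rfl⟩ _ ⟨k', hk', rfl⟩ h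
      simp only [map_add] at h
      have hq : q k = q k' := by
        have := add_left_cancel h
        exact this
      have hsub : k - k' ∈ K₂ := (QuotientAddGroup.eq_iff_sub_mem ..).mp hq
      have hsub1 : k - k' ∈ K₁ := sub_mem hk hk'
      have := hKinj _ hsub1 hsub
      simp [sub_eq_zero.mp this]
    · rintro _ ⟨_, ⟨k, hk, rfl⟩, rfl⟩
      exact ⟨z + k, ⟨k, hk, rfl⟩, by simp [map_add]⟩
end

section
/- Let (X,μ) be a standard Borel probability space, let (B_n)_{n≥1} be a sequence of sub-σ-algebras of the Borel σ-algebra of X, and let C_n ⊆ B_n be further sub-σ-algebras. Assume that for all n ≠ m the pair (B_n, B_m) is relatively independent over (C_n, C_m), in the sense that ∫_X f·g dμ = ∫_X E_μ(f|C_n)·E_μ(g|C_m) dμ for all bounded B_n-measurable f and bounded B_m-measurable g. If f ∈ L^∞(μ) satisfies limsup_{n→∞} ‖E_μ(f|B_n)‖_{L²(μ)} > 0, then also limsup_{n→∞} ‖E_μ(f|C_n)‖_{L²(μ)} > 0. -/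
open MeasureTheory Filter
open scoped ENNReal
open scoped NNReal

set_option maxHeartbeats 1000000

lemma aux_eLpNorm_two_eq {X : Type*} [MeasurableSpace X] {μ : Measure X}
    {g : X → ℝ} (hg : MemLp g 2 μ) :
    eLpNorm g 2 μ = ENNReal.ofReal (Real.sqrt (∫ x, g x ^ 2 ∂μ)) := by
  rw [hg.eLpNorm_eq_integral_rpow_norm (by norm_num) (by norm_num)]
  congr 1
  rw [ENNReal.toReal_ofNat, Real.sqrt_eq_rpow]
  have : ∫ x, ‖g x‖ ^ (2:ℝ) ∂μ = ∫ x, g x ^ 2 ∂μ := by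
    refine integral_congr_ae (Eventually.of_forall fun x => ?_)
    show ‖g x‖ ^ (2:ℝ) = g x ^ 2
    rw [show ‖g x‖ ^ (2:ℝ) = ‖g x‖ ^ (2:ℕ) by rw [← Real.rpow_natCast]; norm_num]
    simp [sq_abs]
  rw [this]
  norm_num

lemma aux_mul_integrable {X : Type*} [MeasurableSpace X] {μ : Measure X} {u v : X → ℝ}
    (hu : MemLp u 2 μ) (hv : MemLp v 2 μ) :
    Integrable (fun x => u x * v x) μ := by
  have hm : MemLp (u • v) 1 μ := hv.smul hu
  exact memLp_one_iff_integrable.mp hm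

lemma aux_cs {X : Type*} [MeasurableSpace X] {μ : Measure X} {u v : X → ℝ}
    (hu : MemLp u 2 μ) (hv : MemLp v 2 μ) :
    ∫ x, u x * v x ∂μ ≤
      Real.sqrt (∫ x, u x ^ 2 ∂μ) * Real.sqrt (∫ x, v x ^ 2 ∂μ) := by
  have hcj : Real.HolderConjugate 2 2 := ⟨by norm_num, by norm_num, by norm_num⟩
  have h2 : ENNReal.ofReal (2:ℝ) = 2 := by norm_num
  have key := integral_mul_norm_le_Lp_mul_Lq (μ := μ) hcj (h2 ▸ hu) (h2 ▸ hv)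
  have huv : Integrable (fun x => u x * v x) μ := aux_mul_integrable hu hv
  calc ∫ x, u x * v x ∂μ ≤ ∫ x, ‖u x‖ * ‖v x‖ ∂μ := by
        refine integral_mono_ae huv ?_ (Eventually.of_forall fun x => ?_)
        · exact aux_mul_integrable hu.norm hv.norm
        · calc u x * v x ≤ |u x * v x| := le_abs_self _
            _ = ‖u x‖ * ‖v x‖ := by rw [abs_mul]; rfl
    _ ≤ (∫ x, ‖u x‖ ^ (2:ℝ) ∂μ) ^ (1/2:ℝ) * (∫ x, ‖v x‖ ^ (2:ℝ) ∂μ) ^ (1/2:ℝ) := key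
    _ = Real.sqrt (∫ x, u x ^ 2 ∂μ) * Real.sqrt (∫ x, v x ^ 2 ∂μ) := by
        have conv : ∀ w : X → ℝ,
            (∫ x, ‖w x‖ ^ (2:ℝ) ∂μ) ^ (1/2:ℝ) = Real.sqrt (∫ x, w x ^ 2 ∂μ) := by
          intro w
          rw [Real.sqrt_eq_rpow]
          congr 1
          refine integral_congr_ae (Eventually.of_forall fun x => ?_)
          show ‖w x‖ ^ (2:ℝ) = w x ^ 2
          rw [show ‖w x‖ ^ (2:ℝ) = ‖w x‖ ^ (2:ℕ) by rw [← Real.rpow_natCast]; norm_num]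
          simp [sq_abs]
        rw [conv u, conv v]

set_option maxHeartbeats 1000000

set_option linter.unnecessarySeqFocus false

/-- **Lemma (pairwise relatively independent factor sequences).**
Let `(X, μ)` be a standard Borel probability space, `(B_n)` sub-σ-algebras, and `C_n ⊆ B_n`
further sub-σ-algebras such that for `n ≠ m` the pair `(B_n, B_m)` is relatively independent
over `(C_n, C_m)`.  If `f ∈ L^∞(μ)` has `limsup_n ‖E(f|B_n)‖₂ > 0`, then also
`limsup_n ‖E(f|C_n)‖₂ > 0`. -/
theorem limsup_condexp_pos_of_rel_indep
    {X : Type} [mX : MeasurableSpace X] [StandardBorelSpace X]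
    (μ : Measure X) [IsProbabilityMeasure μ]
    (B C : ℕ → MeasurableSpace X)
    (hB : ∀ n, B n ≤ mX) (hCB : ∀ n, C n ≤ B n)
    (hind : ∀ n m, n ≠ m → ∀ f g : X → ℝ,
      (∃ c : ℝ, ∀ x, |f x| ≤ c) → (∃ c : ℝ, ∀ x, |g x| ≤ c) →
      Measurable[B n] f → Measurable[B m] g →
      ∫ x, f x * g x ∂μ = ∫ x, (μ[f|C n]) x * (μ[g|C m]) x ∂μ)
    (f : X → ℝ) (hf : MemLp f ⊤ μ)
    (h : 0 < atTop.limsup fun n => eLpNorm (μ[f|B n]) 2 μ) :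
    0 < atTop.limsup fun n => eLpNorm (μ[f|C n]) 2 μ := by
  by_contra hC0
  rw [not_lt, le_zero_iff] at hC0
  -- the bound on `f`
  set K : ℝ≥0 := (eLpNorm f ⊤ μ).toNNReal + 1 with hKdef
  have hKr1 : (1:ℝ) ≤ (K:ℝ) := by
    simp only [hKdef, NNReal.coe_add, NNReal.coe_one]
    nlinarith [NNReal.coe_nonneg (eLpNorm f ⊤ μ).toNNReal]
  have hKr0 : (0:ℝ) < (K:ℝ) := lt_of_lt_of_le one_pos hKr1
  have hK : ∀ᵐ x ∂μ, |f x| ≤ (K:ℝ) := by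
    filter_upwards [ae_le_eLpNormEssSup (f := f) (μ := μ)] with x hx
    have hfx : (‖f x‖₊ : ℝ≥0∞) ≤ eLpNorm f ⊤ μ := by
      rw [eLpNorm_exponent_top]; exact hx
    have hlt : eLpNorm f ⊤ μ ≠ ⊤ := hf.2.ne
    have h1 : ‖f x‖₊ ≤ (eLpNorm f ⊤ μ).toNNReal := by
      rw [← ENNReal.coe_le_coe, ENNReal.coe_toNNReal hlt]; exact hfx
    have h2 : (‖f x‖₊ : ℝ) ≤ ((eLpNorm f ⊤ μ).toNNReal : ℝ) := h1
    calc |f x| = (‖f x‖₊ : ℝ) := by simp [Real.norm_eq_abs]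
      _ ≤ ((eLpNorm f ⊤ μ).toNNReal : ℝ) := h2
      _ ≤ (K:ℝ) := by
          rw [hKdef]; push_cast; linarith
  have hfint : Integrable f μ := hf.integrable le_top
  have hf2 : MemLp f 2 μ := hf.mono_exponent le_top
  set g : ℕ → X → ℝ := fun n => μ[f|B n] with hgdef
  set c : ℕ → X → ℝ := fun n => μ[f|C n] with hcdef
  have hCmX : ∀ n, C n ≤ mX := fun n => (hCB n).trans (hB n)
  have hgbd : ∀ n, ∀ᵐ x ∂μ, |g n x| ≤ (K:ℝ) := fun n => ae_bdd_condExp_of_ae_bdd hK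
  have hcbd : ∀ n, ∀ᵐ x ∂μ, |c n x| ≤ (K:ℝ) := fun n => ae_bdd_condExp_of_ae_bdd hK
  have hgsm : ∀ n, StronglyMeasurable[B n] (g n) := fun n => stronglyMeasurable_condExp
  have hg2 : ∀ n, MemLp (g n) 2 μ := by
    intro n
    refine (memLp_top_of_bound ((hgsm n).mono (hB n)).aestronglyMeasurable (K:ℝ) ?_).mono_exponent le_top
    filter_upwards [hgbd n] with x hx
    rwa [Real.norm_eq_abs]
  have hc2 : ∀ n, MemLp (c n) 2 μ := by
    intro n
    refine (memLp_top_of_bound ((stronglyMeasurable_condExp (m := C n)).mono (hCmX n)).aestronglyMeasurable (K:ℝ) ?_).mono_exponent le_top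
    filter_upwards [hcbd n] with x hx
    rwa [Real.norm_eq_abs]
  set a : ℕ → ℝ := fun n => ∫ x, g n x ^ 2 ∂μ with hadef
  set b : ℕ → ℝ := fun n => ∫ x, c n x ^ 2 ∂μ with hbdef
  have ha0 : ∀ n, 0 ≤ a n := fun n => integral_nonneg fun x => sq_nonneg _
  have hb0 : ∀ n, 0 ≤ b n := fun n => integral_nonneg fun x => sq_nonneg _
  have eLg : ∀ n, eLpNorm (g n) 2 μ = ENNReal.ofReal (Real.sqrt (a n)) :=
    fun n => aux_eLpNorm_two_eq (hg2 n)
  have eLc : ∀ n, eLpNorm (c n) 2 μ = ENNReal.ofReal (Real.sqrt (b n)) :=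
    fun n => aux_eLpNorm_two_eq (hc2 n)
  -- truncation
  set G : ℕ → X → ℝ := fun n x => max (-(K:ℝ)) (min (K:ℝ) (g n x)) with hGdef
  have hGmeas : ∀ n, Measurable[B n] (G n) := fun n =>
    measurable_const.max (measurable_const.min (hgsm n).measurable)
  have hGbd : ∀ n x, |G n x| ≤ (K:ℝ) := by
    intro n x
    refine abs_le.mpr ⟨le_max_left _ _, max_le (by linarith) (min_le_left _ _)⟩
  have hGeq : ∀ n, G n =ᵐ[μ] g n := by
    intro n
    filter_upwards [hgbd n] with x hx
    obtain ⟨h1, h2⟩ := abs_le.mp hx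
    show max (-(K:ℝ)) (min (K:ℝ) (g n x)) = g n x
    rw [min_eq_right h2, max_eq_right h1]
  have hGasm : ∀ n, AEStronglyMeasurable (G n) μ := fun n =>
    ((hGmeas n).mono (hB n) le_rfl).stronglyMeasurable.aestronglyMeasurable
  have hG2 : ∀ n, MemLp (G n) 2 μ := by
    intro n
    refine (memLp_top_of_bound (hGasm n) (K:ℝ) ?_).mono_exponent le_top
    exact Eventually.of_forall fun x => by rw [Real.norm_eq_abs]; exact hGbd n x
  -- Key 1 : ∫ G n * f = a n
  have hGfint : ∀ n, Integrable (fun x => G n x * f x) μ := fun n =>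
    aux_mul_integrable (hG2 n) hf2
  have key1 : ∀ n, ∫ x, G n x * f x ∂μ = a n := by
    intro n
    have hmul : μ[G n * f|B n] =ᵐ[μ] G n * μ[f|B n] :=
      condExp_stronglyMeasurable_mul_of_bound (hB n)
        ((hGmeas n).stronglyMeasurable) hfint (K:ℝ)
        (Eventually.of_forall fun x => by rw [Real.norm_eq_abs]; exact hGbd n x)
    calc ∫ x, G n x * f x ∂μ = ∫ x, (μ[G n * f|B n]) x ∂μ :=
          (integral_condExp (hB n) (f := G n * f)).symm
      _ = ∫ x, (G n * μ[f|B n]) x ∂μ := integral_congr_ae hmul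
      _ = ∫ x, g n x * g n x ∂μ := by
          refine integral_congr_ae ?_
          filter_upwards [hGeq n] with x hx
          show G n x * g n x = g n x * g n x
          rw [hx]
      _ = a n := by
          refine integral_congr_ae (Eventually.of_forall fun x => ?_)
          show g n x * g n x = g n x ^ 2
          ring
  -- diagonal bound
  have keydiag : ∀ n, ∫ x, G n x * G n x ∂μ ≤ (K:ℝ)^2 := by
    intro n
    calc ∫ x, G n x * G n x ∂μ ≤ ∫ _x, (K:ℝ)^2 ∂μ := by
          refine integral_mono_ae (aux_mul_integrable (hG2 n) (hG2 n))
            (integrable_const _) (Eventually.of_forall fun x => ?_)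
          show G n x * G n x ≤ (K:ℝ)^2
          have h := hGbd n x
          have h2 : G n x * G n x ≤ (K:ℝ) * (K:ℝ) := by
            rw [← abs_mul_abs_self]
            exact mul_le_mul h h (abs_nonneg _) hKr0.le
          nlinarith
      _ = (K:ℝ)^2 := by simp
  have keyf : ∫ x, f x ^ 2 ∂μ ≤ (K:ℝ)^2 := by
    calc ∫ x, f x ^ 2 ∂μ ≤ ∫ _x, (K:ℝ)^2 ∂μ := by
          refine integral_mono_ae ?_ (integrable_const _) ?_
          · have := aux_mul_integrable hf2 hf2
            refine this.congr (Eventually.of_forall fun x => by ring)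
          · filter_upwards [hK] with x hx
            obtain ⟨h1, h2⟩ := abs_le.mp hx
            nlinarith
      _ = (K:ℝ)^2 := by simp
  -- Key 2 : the cross terms
  have key2 : ∀ n m, n ≠ m →
      ∫ x, G n x * G m x ∂μ ≤ Real.sqrt (b n) * Real.sqrt (b m) := by
    intro n m hnm
    have hcond : ∀ k, μ[G k|C k] =ᵐ[μ] c k := fun k =>
      (condExp_congr_ae (hGeq k)).trans (condExp_condExp_of_le (hCB k) (hB k))
    rw [hind n m hnm (G n) (G m) ⟨(K:ℝ), hGbd n⟩ ⟨(K:ℝ), hGbd m⟩ (hGmeas n) (hGmeas m)]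
    calc ∫ x, (μ[G n|C n]) x * (μ[G m|C m]) x ∂μ = ∫ x, c n x * c m x ∂μ := by
          refine integral_congr_ae ?_
          filter_upwards [hcond n, hcond m] with x h1 h2
          rw [h1, h2]
      _ ≤ Real.sqrt (b n) * Real.sqrt (b m) := aux_cs (hc2 n) (hc2 m)
  -- choose ε
  obtain ⟨ε, hε0, hεL, hεtop⟩ :
      ∃ ε : ℝ≥0∞, 0 < ε ∧ ε < atTop.limsup (fun n => eLpNorm (g n) 2 μ) ∧ ε ≠ ⊤ := by
    by_cases hL : atTop.limsup (fun n => eLpNorm (g n) 2 μ) = ⊤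
    · exact ⟨1, zero_lt_one, by rw [hL]; exact ENNReal.one_lt_top, ENNReal.one_ne_top⟩
    · refine ⟨_ / 2, ENNReal.half_pos h.ne', ENNReal.half_lt_self h.ne' hL, ?_⟩
      exact ne_of_lt (lt_of_le_of_lt ENNReal.half_le_self (lt_top_iff_ne_top.2 hL))
  set εr : ℝ := ε.toReal with hεrdef
  have hεr0 : 0 < εr := ENNReal.toReal_pos hε0.ne' hεtop
  have hfreq : ∃ᶠ n in atTop, ε < eLpNorm (g n) 2 μ := frequently_lt_of_lt_limsup (by isBoundedDefault) hεL
  set δ : ℝ := εr^2 / (2 * (K:ℝ)) with hδdef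
  have hδ0 : 0 < δ := by positivity
  have hev : ∀ᶠ n in atTop, eLpNorm (c n) 2 μ < ENNReal.ofReal δ := by
    refine eventually_lt_of_limsup_lt ?_ (by isBoundedDefault)
    rw [hC0]
    exact ENNReal.ofReal_pos.mpr hδ0
  obtain ⟨φ, hφ, hφP⟩ := extraction_of_frequently_atTop (hfreq.and_eventually hev)
  have hA : ∀ k, εr^2 ≤ a (φ k) := by
    intro k
    have h1 : ε < ENNReal.ofReal (Real.sqrt (a (φ k))) := by
      rw [← eLg]; exact (hφP k).1
    have h2 : εr ≤ Real.sqrt (a (φ k)) := by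
      have := ENNReal.toReal_mono ENNReal.ofReal_ne_top h1.le
      rwa [ENNReal.toReal_ofReal (Real.sqrt_nonneg _)] at this
    calc εr^2 ≤ Real.sqrt (a (φ k)) ^ 2 := by nlinarith [Real.sqrt_nonneg (a (φ k))]
      _ = a (φ k) := Real.sq_sqrt (ha0 _)
  have hBb : ∀ k, Real.sqrt (b (φ k)) ≤ δ := by
    intro k
    have h1 := (hφP k).2
    rw [eLc] at h1
    exact ((ENNReal.ofReal_lt_ofReal_iff hδ0).mp h1).le
  -- the contradiction with a large N
  set Q : ℝ := 2 * (K:ℝ)^2 / εr^2 with hQdef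
  have hQ0 : 0 < Q := by positivity
  set N : ℕ := ⌊Q^2⌋₊ + 1 with hNdef
  have hN1 : 1 ≤ N := Nat.le_add_left 1 _
  have hNgt : Q^2 < (N:ℝ) := by
    have := Nat.lt_floor_add_one (Q^2)
    push_cast [hNdef]
    push_cast at this
    linarith
  have hNr1 : (1:ℝ) ≤ (N:ℝ) := by exact_mod_cast hN1
  set S : X → ℝ := fun x => ∑ i ∈ Finset.range N, G (φ i) x with hSdef
  have hS2 : MemLp S 2 μ := memLp_finset_sum (Finset.range N) fun i _ => hG2 (φ i)
  -- lower bound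
  have est1 : (N:ℝ) * εr^2 ≤ ∫ x, S x * f x ∂μ := by
    have hsum : ∫ x, S x * f x ∂μ = ∑ i ∈ Finset.range N, ∫ x, G (φ i) x * f x ∂μ := by
      rw [← integral_finset_sum _ fun i _ => hGfint (φ i)]
      refine integral_congr_ae (Eventually.of_forall fun x => ?_)
      show S x * f x = ∑ i ∈ Finset.range N, G (φ i) x * f x
      rw [hSdef, Finset.sum_mul]
    rw [hsum]
    calc (N:ℝ) * εr^2 = ∑ _i ∈ Finset.range N, εr^2 := by
          rw [Finset.sum_const, Finset.card_range, nsmul_eq_mul]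
      _ ≤ ∑ i ∈ Finset.range N, a (φ i) := Finset.sum_le_sum fun i _ => hA i
      _ = ∑ i ∈ Finset.range N, ∫ x, G (φ i) x * f x ∂μ :=
          Finset.sum_congr rfl fun i _ => (key1 (φ i)).symm
  -- upper bound
  have est3 : ∫ x, S x ^ 2 ∂μ ≤ (N:ℝ) * (K:ℝ)^2 + (N:ℝ)^2 * δ^2 := by
    have hexp : ∫ x, S x ^ 2 ∂μ =
        ∑ i ∈ Finset.range N, ∑ j ∈ Finset.range N, ∫ x, G (φ i) x * G (φ j) x ∂μ := by
      have h1 : ∫ x, S x ^ 2 ∂μ =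
          ∫ x, ∑ i ∈ Finset.range N, ∑ j ∈ Finset.range N, G (φ i) x * G (φ j) x ∂μ := by
        refine integral_congr_ae (Eventually.of_forall fun x => ?_)
        show S x ^ 2 = _
        rw [sq, hSdef, Finset.sum_mul_sum]
      rw [h1, integral_finset_sum _ fun i _ => integrable_finset_sum _
        fun j _ => aux_mul_integrable (hG2 (φ i)) (hG2 (φ j))]
      exact Finset.sum_congr rfl fun i _ =>
        integral_finset_sum _ fun j _ => aux_mul_integrable (hG2 (φ i)) (hG2 (φ j))
    rw [hexp]
    have hterm : ∀ i ∈ Finset.range N, ∀ j ∈ Finset.range N,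
        ∫ x, G (φ i) x * G (φ j) x ∂μ ≤ if i = j then (K:ℝ)^2 else δ^2 := by
      intro i _ j _
      by_cases hij : i = j
      · subst hij; simpa using keydiag (φ i)
      · rw [if_neg hij]
        have hne : φ i ≠ φ j := fun hc => hij (hφ.injective hc)
        calc ∫ x, G (φ i) x * G (φ j) x ∂μ
            ≤ Real.sqrt (b (φ i)) * Real.sqrt (b (φ j)) := key2 _ _ hne
          _ ≤ δ * δ := mul_le_mul (hBb i) (hBb j) (Real.sqrt_nonneg _) hδ0.le
          _ = δ^2 := (sq δ).symm
    calc ∑ i ∈ Finset.range N, ∑ j ∈ Finset.range N, ∫ x, G (φ i) x * G (φ j) x ∂μ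
        ≤ ∑ i ∈ Finset.range N, ∑ j ∈ Finset.range N, (if i = j then (K:ℝ)^2 else δ^2) :=
          Finset.sum_le_sum fun i hi => Finset.sum_le_sum fun j hj => hterm i hi j hj
      _ ≤ ∑ i ∈ Finset.range N, ((K:ℝ)^2 + (N:ℝ) * δ^2) := by
          refine Finset.sum_le_sum fun i hi => ?_
          calc ∑ j ∈ Finset.range N, (if i = j then (K:ℝ)^2 else δ^2)
              ≤ ∑ j ∈ Finset.range N, ((if i = j then (K:ℝ)^2 else 0) + δ^2) := by
                refine Finset.sum_le_sum fun j _ => ?_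
                by_cases hij : i = j <;> simp [hij, sq_nonneg]
            _ = (if i ∈ Finset.range N then (K:ℝ)^2 else 0) + (N:ℝ) * δ^2 := by
                rw [Finset.sum_add_distrib, Finset.sum_ite_eq, Finset.sum_const,
                  Finset.card_range, nsmul_eq_mul]
            _ ≤ (K:ℝ)^2 + (N:ℝ) * δ^2 := by
                split_ifs <;> simp [sq_nonneg]
      _ = (N:ℝ) * ((K:ℝ)^2 + (N:ℝ) * δ^2) := by
          rw [Finset.sum_const, Finset.card_range, nsmul_eq_mul]
      _ = (N:ℝ) * (K:ℝ)^2 + (N:ℝ)^2 * δ^2 := by ring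
  have est2 : ∫ x, S x * f x ∂μ ≤ Real.sqrt (∫ x, S x ^ 2 ∂μ) * (K:ℝ) := by
    calc ∫ x, S x * f x ∂μ
        ≤ Real.sqrt (∫ x, S x ^ 2 ∂μ) * Real.sqrt (∫ x, f x ^ 2 ∂μ) := aux_cs hS2 hf2
      _ ≤ Real.sqrt (∫ x, S x ^ 2 ∂μ) * (K:ℝ) := by
          refine mul_le_mul_of_nonneg_left ?_ (Real.sqrt_nonneg _)
          calc Real.sqrt (∫ x, f x ^ 2 ∂μ) ≤ Real.sqrt ((K:ℝ)^2) := Real.sqrt_le_sqrt keyf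
            _ = (K:ℝ) := Real.sqrt_sq hKr0.le
  -- put everything together
  have hsqrtS : Real.sqrt (∫ x, S x ^ 2 ∂μ) ≤ Real.sqrt (N:ℝ) * (K:ℝ) + (N:ℝ) * δ := by
    have hbound : ∫ x, S x ^ 2 ∂μ ≤ (Real.sqrt (N:ℝ) * (K:ℝ) + (N:ℝ) * δ)^2 := by
      have hsqN : Real.sqrt (N:ℝ) ^ 2 = (N:ℝ) := Real.sq_sqrt (by positivity)
      nlinarith [Real.sqrt_nonneg (N:ℝ), est3, sq_nonneg δ, hδ0.le, hKr0.le,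
        mul_nonneg (mul_nonneg (Real.sqrt_nonneg (N:ℝ)) hKr0.le) (mul_nonneg (by positivity : (0:ℝ) ≤ (N:ℝ)) hδ0.le)]
    calc Real.sqrt (∫ x, S x ^ 2 ∂μ) ≤ Real.sqrt ((Real.sqrt (N:ℝ) * (K:ℝ) + (N:ℝ) * δ)^2) :=
          Real.sqrt_le_sqrt hbound
      _ = Real.sqrt (N:ℝ) * (K:ℝ) + (N:ℝ) * δ := by
          refine Real.sqrt_sq ?_
          have : (0:ℝ) ≤ (N:ℝ) * δ := by positivity
          nlinarith [Real.sqrt_nonneg (N:ℝ), hKr0.le]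
  have hmain : (N:ℝ) * εr^2 ≤ Real.sqrt (N:ℝ) * (K:ℝ)^2 + (N:ℝ) * ((K:ℝ) * δ) := by
    calc (N:ℝ) * εr^2 ≤ ∫ x, S x * f x ∂μ := est1
      _ ≤ Real.sqrt (∫ x, S x ^ 2 ∂μ) * (K:ℝ) := est2
      _ ≤ (Real.sqrt (N:ℝ) * (K:ℝ) + (N:ℝ) * δ) * (K:ℝ) := by
          refine mul_le_mul_of_nonneg_right hsqrtS hKr0.le
      _ = Real.sqrt (N:ℝ) * (K:ℝ)^2 + (N:ℝ) * ((K:ℝ) * δ) := by ring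
  have hKδ : (K:ℝ) * δ = εr^2 / 2 := by
    rw [hδdef]; field_simp
  rw [hKδ] at hmain
  -- from hmain : N εr² ≤ √N K² + N εr²/2, so N εr²/2 ≤ √N K², so √N ≤ Q, so N ≤ Q²
  clear_value N Q S G g c a b
  have hsqN : Real.sqrt (N:ℝ) ^ 2 = (N:ℝ) := Real.sq_sqrt (by positivity)
  have hsN0 : 0 < Real.sqrt (N:ℝ) := Real.sqrt_pos.mpr (by linarith)
  have h1 : (N:ℝ) * (εr^2 / 2) ≤ Real.sqrt (N:ℝ) * (K:ℝ)^2 := by linarith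
  have h2' : Real.sqrt (N:ℝ) * εr^2 ≤ 2 * (K:ℝ)^2 := by
    nlinarith [h1, hsqN, hsN0]
  have h4 : (N:ℝ) * εr^4 ≤ 4 * (K:ℝ)^4 := by
    nlinarith [mul_le_mul h2' h2' (by positivity) (by positivity), hsqN]
  have hQ4 : Q^2 * εr^4 = 4 * (K:ℝ)^4 := by
    rw [hQdef]; field_simp; ring
  nlinarith [hNgt, h4, hQ4, pow_pos hεr0 4]
end

section
/- Let n₁, n₂ ∈ ℤ² be linearly independent and m ≥ 1 an integer. Then every ℤ²-system belonging to the class Z₀^{ℤn₁} ∨ Z₀^{mℤn₂} is a factor of a ℤ²-system belonging to Z₀^{ℤn₁} ∨ Z₀^{ℤn₂}. Concretely: if (X,μ,T) is a ℤ²-system generated by a factor whose ℤn₁-subaction is trivial together with a factor whose ℤ(mn₂)-subaction is trivial, then there exists a ℤ²-system (X̃,μ̃,T̃) generated by a factor with trivial ℤn₁-subaction together with a factor with trivial ℤn₂-subaction, which admits (X,μ,T) as a factor. -/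
open MeasureTheory

/-- A probability-preserving `ℤ²`-action. -/
def IsMPAction {X : Type} [MeasurableSpace X] (μ : Measure X) (T : ℤ × ℤ → X → X) : Prop :=
  T 0 = id ∧ (∀ m n : ℤ × ℤ, T (m + n) = T m ∘ T n) ∧ ∀ n : ℤ × ℤ, MeasurePreserving (T n) μ μ

/-- `π` is a factor map from the system `(X, μ, T)` onto the system `(Y, ν, S)`. -/
def IsFactorMap {X Y : Type} [MeasurableSpace X] [MeasurableSpace Y]
    (μ : Measure X) (T : ℤ × ℤ → X → X) (ν : Measure Y) (S : ℤ × ℤ → Y → Y)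
    (π : X → Y) : Prop :=
  Measurable π ∧ MeasurePreserving π μ ν ∧ ∀ n : ℤ × ℤ, ∀ᵐ x ∂μ, π (T n x) = S n (π x)

/-- The two factor maps `ξ₁, ξ₂` jointly generate the σ-algebra of `X` modulo `μ`. -/
def GeneratesPair {X Y₁ Y₂ : Type} [MeasurableSpace X] [MeasurableSpace Y₁] [MeasurableSpace Y₂]
    (μ : Measure X) (ξ₁ : X → Y₁) (ξ₂ : X → Y₂) : Prop :=
  ∀ A : Set X, MeasurableSet A →
    ∃ A' : Set X,
      MeasurableSet[MeasurableSpace.comap ξ₁ inferInstance ⊔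
        MeasurableSpace.comap ξ₂ inferInstance] A' ∧
      μ (symmDiff A A') = 0

section Helpers

lemma exists_exact_trivial {Y : Type} [MeasurableSpace Y] [StandardBorelSpace Y]
    (ν : Measure Y) [IsProbabilityMeasure ν] (S : ℤ × ℤ → Y → Y) (hS : IsMPAction ν S)
    (g0 : ℤ × ℤ) (h : ∀ᵐ y ∂ν, S g0 y = y) :
    ∃ S' : ℤ × ℤ → Y → Y, IsMPAction ν S' ∧ S' g0 = id ∧ ∀ v, S' v =ᵐ[ν] S v := by
  classical
  obtain ⟨hzero, hadd, hmp⟩ := hS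
  letI := upgradeStandardBorel Y
  have hmeas : ∀ v, Measurable (S v) := fun v => (hmp v).measurable
  set E : Set Y := {y | S g0 y = y} with hE
  have mE : MeasurableSet E := by
    exact StronglyMeasurable.measurableSet_eq_fun ((hmeas g0).stronglyMeasurable)
      stronglyMeasurable_id
  set E' : Set Y := ⋂ v : ℤ × ℤ, S v ⁻¹' E with hE'
  have mE' : MeasurableSet E' := MeasurableSet.iInter fun v => (hmeas v) mE
  have hE'E : E' ⊆ E := by
    intro y hy
    have := Set.mem_iInter.1 hy 0
    simpa [hzero] using this
  have hE'inv : ∀ v y, y ∈ E' → S v y ∈ E' := by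
    intro v y hy
    refine Set.mem_iInter.2 fun k => ?_
    have : S (k + v) y ∈ E := Set.mem_iInter.1 hy (k + v)
    simpa [hadd k v] using this
  have hE'conull : ν E'ᶜ = 0 := by
    have hEc : ν Eᶜ = 0 := by
      have := h
      rw [ae_iff] at this
      exact this
    rw [hE', Set.compl_iInter]
    refine measure_iUnion_null fun v => ?_
    have : ν (S v ⁻¹' Eᶜ) = ν Eᶜ := (hmp v).measure_preimage mE.compl.nullMeasurableSet
    simpa [Set.preimage_compl] using this.trans hEc
  have hae' : ∀ᵐ y ∂ν, y ∈ E' := by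
    rw [ae_iff]; simpa [Set.compl_def] using hE'conull
  refine ⟨fun v y => if y ∈ E' then S v y else y, ⟨?_, ?_, ?_⟩, ?_, ?_⟩
  · funext y; by_cases hy : y ∈ E' <;> simp [hy, hzero]
  · intro a b; funext y
    by_cases hy : y ∈ E'
    · simp [hy, hE'inv b y hy, hadd a b]
    · simp [hy]
  · intro v
    have meas' : Measurable fun y => if y ∈ E' then S v y else y :=
      Measurable.ite mE' (hmeas v) measurable_id
    refine ⟨meas', ?_⟩
    have hae : (fun y => if y ∈ E' then S v y else y) =ᵐ[ν] S v := by
      filter_upwards [hae'] with y hy; simp [hy]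
    rw [Measure.map_congr hae, (hmp v).map_eq]
  · funext y; by_cases hy : y ∈ E'
    · have hy' : S g0 y = y := hE'E hy
      simpa [hy] using hy'
    · simp [hy]
  · intro v
    filter_upwards [hae'] with y hy
    simp [hy]

lemma modM_div_modEq (m D' : ℕ) (hD' : 0 < D') (x : ℕ) :
    (x % (m * D')) / D' ≡ x / D' [MOD m] := by
  conv_rhs => rw [← Nat.mod_add_div x (m * D')]
  have h : x % (m * D') + m * D' * (x / (m * D')) = x % (m * D') + D' * (m * (x / (m * D'))) := by
    ring
  rw [h, Nat.add_mul_div_left _ _ hD']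
  simp [Nat.ModEq, Nat.add_mul_mod_self_left]

lemma star_lemma (m D' : ℕ) (hD' : 0 < D') [NeZero (m * D')]
    (j k : ZMod (m * D')) :
    (j + k).val / D' ≡ j.val / D' + (((j.val % D' : ℕ) : ZMod (m * D')) + k).val / D' [MOD m] := by
  have hmpos : 0 < m := by
    rcases Nat.eq_zero_or_pos m with h | h
    · exact absurd (by simp [h]) (NeZero.ne (m * D'))
    · exact h
  have hs : ((j.val % D' : ℕ) : ZMod (m * D')).val = j.val % D' := by
    rw [ZMod.val_natCast_of_lt]
    exact lt_of_lt_of_le (Nat.mod_lt _ hD') (Nat.le_mul_of_pos_left _ hmpos)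
  rw [ZMod.val_add, ZMod.val_add, hs]
  calc (j.val + k.val) % (m * D') / D' ≡ (j.val + k.val) / D' [MOD m] :=
        modM_div_modEq m D' hD' _
    _ = j.val / D' + (j.val % D' + k.val) / D' := by
        have h : j.val + k.val = (j.val % D' + k.val) + D' * (j.val / D') := by
          have := Nat.mod_add_div j.val D'; omega
        rw [h, Nat.add_mul_div_left _ _ hD', Nat.add_comm]
    _ ≡ j.val / D' + (j.val % D' + k.val) % (m * D') / D' [MOD m] :=
        Nat.ModEq.add_left _ (modM_div_modEq m D' hD' _).symm

section ActionHelpers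
variable {Y : Type} (S : ℤ × ℤ → Y → Y)
variable (hzero : S 0 = id) (hadd : ∀ a b : ℤ × ℤ, S (a + b) = S a ∘ S b)

include hzero hadd

lemma act_zsmul_id (u : ℤ × ℤ) (hu : S u = id) : ∀ k : ℤ, S (k • u) = id := by
  have hneg : S (-u) = id := by
    have := hadd (-u) u
    simp [hu, neg_add_cancel, hzero] at this
    exact this.symm
  intro k
  induction k using Int.induction_on with
  | zero => simpa using hzero
  | succ k ih => rw [add_smul, one_smul, hadd, ih, hu]; rfl
  | pred k ih => rw [sub_smul, one_smul, sub_eq_add_neg, hadd, ih, hneg]; rfl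

lemma act_congr_smul (n₂ : ℤ × ℤ) (mz : ℤ) (hmz : S (mz • n₂) = id)
    (a b : ℤ) (hab : a ≡ b [ZMOD mz]) : S (a • n₂) = S (b • n₂) := by
  obtain ⟨k, hk⟩ := (Int.modEq_iff_dvd.1 hab)
  have : a • n₂ = b • n₂ + (-k) • (mz • n₂) := by
    rw [smul_smul, ← add_smul]
    congr 1
    have := mul_comm mz k
    linarith
  rw [this, hadd, act_zsmul_id S hzero hadd _ hmz]
  simp

lemma act_congr_sub (n₂ : ℤ × ℤ) (mz : ℤ) (hmz : S (mz • n₂) = id)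
    (v : ℤ × ℤ) (a b : ℤ) (hab : a ≡ b [ZMOD mz]) : S (v - a • n₂) = S (v - b • n₂) := by
  have h1 : v - a • n₂ = v + (-a) • n₂ := by rw [neg_smul]; ring
  have h2 : v - b • n₂ = v + (-b) • n₂ := by rw [neg_smul]; ring
  rw [h1, h2, hadd, hadd, act_congr_smul S hzero hadd n₂ mz hmz (-a) (-b) (Int.ModEq.neg hab)]

end ActionHelpers

lemma det_ne_zero (n₁ n₂ : ℤ × ℤ) (hindep : ∀ a b : ℤ, a • n₁ + b • n₂ = 0 → a = 0 ∧ b = 0) :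
    n₁.1 * n₂.2 - n₁.2 * n₂.1 ≠ 0 := by
  intro hD
  have h1 : n₂.2 • n₁ + (-n₁.2) • n₂ = 0 := by
    apply Prod.ext <;> simp [Prod.smul_def, smul_eq_mul] <;> nlinarith
  have h2 : n₂.1 • n₁ + (-n₁.1) • n₂ = 0 := by
    apply Prod.ext <;> simp [Prod.smul_def, smul_eq_mul] <;> nlinarith
  obtain ⟨ha1, hb1⟩ := hindep _ _ h1
  obtain ⟨ha2, hb2⟩ := hindep _ _ h2
  have : n₁ = 0 := by
    apply Prod.ext <;> simp <;> omega
  obtain ⟨h, h'⟩ := hindep 1 0 (by simp [this])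
  exact one_ne_zero h

end Helpers

/-- **Lemma (reducing partial invariance along a multiple of a direction).**
Let `n₁, n₂ ∈ ℤ²` be linearly independent and `m ≥ 1`.  Any `ℤ²`-system generated by a
factor with trivial `ℤn₁`-subaction together with a factor with trivial `ℤ(mn₂)`-subaction
is a factor of a `ℤ²`-system generated by a factor with trivial `ℤn₁`-subaction together
with a factor with trivial `ℤn₂`-subaction. -/
theorem member_of_join_with_multiple_direction_is_factor_of_join
    (n₁ n₂ : ℤ × ℤ) (hindep : ∀ a b : ℤ, a • n₁ + b • n₂ = 0 → a = 0 ∧ b = 0)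
    (m : ℕ) (hm : 1 ≤ m)
    {X : Type} [MeasurableSpace X] [StandardBorelSpace X]
    (μ : Measure X) [IsProbabilityMeasure μ] (T : ℤ × ℤ → X → X) (hT : IsMPAction μ T)
    {Y₁ : Type} [MeasurableSpace Y₁] [StandardBorelSpace Y₁]
    (ν₁ : Measure Y₁) [IsProbabilityMeasure ν₁] (S₁ : ℤ × ℤ → Y₁ → Y₁) (hS₁ : IsMPAction ν₁ S₁)
    (htriv₁ : ∀ᵐ y ∂ν₁, S₁ n₁ y = y)
    {Y₂ : Type} [MeasurableSpace Y₂] [StandardBorelSpace Y₂]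
    (ν₂ : Measure Y₂) [IsProbabilityMeasure ν₂] (S₂ : ℤ × ℤ → Y₂ → Y₂) (hS₂ : IsMPAction ν₂ S₂)
    (htriv₂ : ∀ᵐ y ∂ν₂, S₂ ((m : ℤ) • n₂) y = y)
    (ξ₁ : X → Y₁) (hξ₁ : IsFactorMap μ T ν₁ S₁ ξ₁)
    (ξ₂ : X → Y₂) (hξ₂ : IsFactorMap μ T ν₂ S₂ ξ₂)
    (hgen : GeneratesPair μ ξ₁ ξ₂) :
    ∃ (X' : Type) (_ : MeasurableSpace X') (_ : StandardBorelSpace X')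
      (μ' : Measure X') (_ : IsProbabilityMeasure μ') (T' : ℤ × ℤ → X' → X')
      (Y'₁ : Type) (_ : MeasurableSpace Y'₁) (_ : StandardBorelSpace Y'₁)
      (ν'₁ : Measure Y'₁) (_ : IsProbabilityMeasure ν'₁) (S'₁ : ℤ × ℤ → Y'₁ → Y'₁)
      (Y'₂ : Type) (_ : MeasurableSpace Y'₂) (_ : StandardBorelSpace Y'₂)
      (ν'₂ : Measure Y'₂) (_ : IsProbabilityMeasure ν'₂) (S'₂ : ℤ × ℤ → Y'₂ → Y'₂)
      (ξ'₁ : X' → Y'₁) (ξ'₂ : X' → Y'₂) (ρ : X' → X),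
      IsMPAction μ' T' ∧ IsMPAction ν'₁ S'₁ ∧ IsMPAction ν'₂ S'₂ ∧
      (∀ᵐ y ∂ν'₁, S'₁ n₁ y = y) ∧ (∀ᵐ y ∂ν'₂, S'₂ n₂ y = y) ∧
      IsFactorMap μ' T' ν'₁ S'₁ ξ'₁ ∧ IsFactorMap μ' T' ν'₂ S'₂ ξ'₂ ∧
      GeneratesPair μ' ξ'₁ ξ'₂ ∧
      IsFactorMap μ' T' μ T ρ := by
  classical
  -- replace `S₂` by an action that is *exactly* trivial on `m • n₂`
  obtain ⟨Q, hQ, hQm, hQae⟩ := exists_exact_trivial ν₂ S₂ hS₂ ((m : ℤ) • n₂) htriv₂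
  obtain ⟨hQ0, hQadd, hQmp⟩ := hQ
  have hQmeas : ∀ v, Measurable (Q v) := fun v => (hQmp v).measurable
  have hξ₂Q : ∀ v : ℤ × ℤ, ∀ᵐ x ∂μ, ξ₂ (T v x) = Q v (ξ₂ x) := by
    intro v
    have h1 := hξ₂.2.2 v
    have h2 : ∀ᵐ x ∂μ, Q v (ξ₂ x) = S₂ v (ξ₂ x) := by
      have : ∀ᵐ y ∂(μ.map ξ₂), Q v y = S₂ v y := by rw [hξ₂.2.1.map_eq]; exact hQae v
      exact ae_of_ae_map hξ₂.1.aemeasurable this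
    filter_upwards [h1, h2] with x hx1 hx2
    rw [hx1, ← hx2]
  -- the determinant and the numbers
  set D₀ : ℤ := n₁.1 * n₂.2 - n₁.2 * n₂.1 with hD₀def
  have hD₀ : D₀ ≠ 0 := det_ne_zero n₁ n₂ hindep
  set d : ℤ × ℤ → ℤ := fun v => if 0 ≤ D₀ then n₁.1 * v.2 - n₁.2 * v.1
    else n₁.2 * v.1 - n₁.1 * v.2 with hddef
  have hdadd : ∀ a b : ℤ × ℤ, d (a + b) = d a + d b := by
    intro a b
    simp only [hddef, Prod.fst_add, Prod.snd_add]
    split <;> ring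
  have hd1 : d n₁ = 0 := by simp only [hddef]; split <;> ring
  set D' : ℕ := D₀.natAbs with hD'def
  have hD' : 0 < D' := Int.natAbs_pos.2 hD₀
  have hd2 : d n₂ = (D' : ℤ) := by
    simp only [hddef, hD'def]
    split_ifs with h
    · rw [← hD₀def]; omega
    · rw [show n₁.2 * n₂.1 - n₁.1 * n₂.2 = -D₀ by rw [hD₀def]; ring]; omega
  set M : ℕ := m * D' with hMdef
  have hMpos : 0 < M := Nat.mul_pos (by omega) hD'
  haveI : NeZero M := ⟨hMpos.ne'⟩
  haveI : NeZero D' := ⟨hD'.ne'⟩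
  have hD'leM : D' ≤ M := Nat.le_mul_of_pos_left _ (by omega)
  -- measurable structure on the fibers
  letI mFM : MeasurableSpace (ZMod M) := ⊤
  letI mFD : MeasurableSpace (ZMod D') := ⊤
  haveI hdiscM : DiscreteMeasurableSpace (ZMod M) := ⟨fun _ => trivial⟩
  haveI hdiscD : DiscreteMeasurableSpace (ZMod D') := ⟨fun _ => trivial⟩
  -- uniform probability measure on `ZMod M`
  set κ : Measure (ZMod M) := (M : ENNReal)⁻¹ • Measure.count with hκdef
  have hκuniv : κ Set.univ = 1 := by
    rw [hκdef]
    simp only [Measure.smul_apply, smul_eq_mul]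
    rw [Measure.count_apply_finite _ Set.finite_univ, Set.Finite.toFinset_univ,
      Finset.card_univ, ZMod.card]
    rw [ENNReal.inv_mul_cancel (by exact_mod_cast Nat.cast_ne_zero.2 hMpos.ne')
      (ENNReal.natCast_ne_top M)]
  haveI hκprob : IsProbabilityMeasure κ := ⟨hκuniv⟩
  have hκsingle : ∀ j : ZMod M, κ {j} = (M : ENNReal)⁻¹ := by
    intro j
    rw [hκdef]
    simp [Measure.count_singleton]
  -- translations preserve κ
  have hκtrans : ∀ a : ZMod M, MeasurePreserving (· + a) κ κ := by
    intro a
    refine ⟨Measurable.of_discrete, ?_⟩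
    rw [hκdef, Measure.map_smul]
    congr 1
    refine Measure.ext fun s hs => ?_
    rw [Measure.map_apply Measurable.of_discrete hs]
    have hpre : (· + a) ⁻¹' s = (fun x => x - a) '' s := by
      ext z; constructor
      · intro hz; exact ⟨z + a, hz, by ring⟩
      · rintro ⟨y, hy, rfl⟩; simpa [sub_add_cancel] using hy
    rw [hpre, Measure.count_injective_image (fun x y h => by
      have : x - a + a = y - a + a := by rw [h]
      simpa [sub_add_cancel] using this)]
  -- the cocycle into the fiber
  set c : ℤ × ℤ → ZMod M := fun v => ((d v : ℤ) : ZMod M) with hcdef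
  have hcadd : ∀ a b : ℤ × ℤ, c (a + b) = c a + c b := by
    intro a b; rw [hcdef]; simp only [hdadd a b]; push_cast; ring
  have hd0 : d 0 = 0 := by
    have := hdadd 0 0; simpa using this.symm
  have hc0 : c 0 = 0 := by simp [hcdef, hd0]
  have hcn₁ : c n₁ = 0 := by simp [hcdef, hd1]
  have hcn₂ : c n₂ = ((D' : ℕ) : ZMod M) := by simp [hcdef, hd2]
  -- the extended system
  set T' : ℤ × ℤ → X × ZMod M → X × ZMod M := fun v p => (T v p.1, p.2 + c v) with hT'def
  set μ' : Measure (X × ZMod M) := μ.prod κ with hμ'def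
  have hT'meas : ∀ v, Measurable (T' v) :=
    fun v => ((hT.2.2 v).measurable.comp measurable_fst).prodMk ((Measurable.of_discrete (f := (· + c v))).comp measurable_snd)
  have hT'act : IsMPAction μ' T' := by
    refine ⟨?_, ?_, ?_⟩
    · funext p
      show (T 0 p.1, p.2 + c 0) = p
      rw [hT.1, hc0]
      simp
    · intro a b; funext p
      simp only [hT'def, Function.comp_apply, hT.2.1 a b, hcadd a b]
      exact Prod.ext rfl (by ring)
    · intro v
      have : MeasurePreserving (Prod.map (T v) (· + c v)) (μ.prod κ) (μ.prod κ) :=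
        (hT.2.2 v).prod (hκtrans (c v))
      exact this
  -- the first factor
  set S'₁ : ℤ × ℤ → Y₁ × ZMod M → Y₁ × ZMod M := fun v p => (S₁ v p.1, p.2 + c v) with hS'₁def
  set ν'₁ : Measure (Y₁ × ZMod M) := ν₁.prod κ with hν'₁def
  have hS'₁act : IsMPAction ν'₁ S'₁ := by
    refine ⟨?_, ?_, ?_⟩
    · funext p
      show (S₁ 0 p.1, p.2 + c 0) = p
      rw [hS₁.1, hc0]
      simp
    · intro a b; funext p
      simp only [hS'₁def, Function.comp_apply, hS₁.2.1 a b, hcadd a b]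
      exact Prod.ext rfl (by ring)
    · intro v
      have : MeasurePreserving (Prod.map (S₁ v) (· + c v)) (ν₁.prod κ) (ν₁.prod κ) :=
        (hS₁.2.2 v).prod (hκtrans (c v))
      exact this
  -- lifting a.e. statements from the first coordinate
  have hliftμ : ∀ (P : X → Prop), (∀ᵐ x ∂μ, P x) → ∀ᵐ p ∂μ', P p.1 := by
    intro P hP
    have hmap : μ'.map Prod.fst = μ := by
      rw [hμ'def]; simp [Measure.map_fst_prod, hκuniv]
    exact ae_of_ae_map measurable_fst.aemeasurable (hmap ▸ hP)
  have hliftν₁ : ∀ (P : Y₁ → Prop), (∀ᵐ y ∂ν₁, P y) → ∀ᵐ p ∂ν'₁, P p.1 := by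
    intro P hP
    have hmap : ν'₁.map Prod.fst = ν₁ := by
      rw [hν'₁def]; simp [Measure.map_fst_prod, hκuniv]
    exact ae_of_ae_map measurable_fst.aemeasurable (hmap ▸ hP)
  have htriv'₁ : ∀ᵐ p ∂ν'₁, S'₁ n₁ p = p := by
    filter_upwards [hliftν₁ _ htriv₁] with p hp
    rw [hS'₁def]
    exact Prod.ext hp (by simp [hcn₁])
  set ξ'₁ : X × ZMod M → Y₁ × ZMod M := fun p => (ξ₁ p.1, p.2) with hξ'₁def
  have hξ'₁fac : IsFactorMap μ' T' ν'₁ S'₁ ξ'₁ := by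
    refine ⟨(hξ₁.1.comp measurable_fst).prodMk measurable_snd, ?_, ?_⟩
    · exact hξ₁.2.1.prod (MeasurePreserving.id κ)
    · intro v
      filter_upwards [hliftμ _ (hξ₁.2.2 v)] with p hp
      exact Prod.ext hp rfl
  -- arithmetic helper functions for the second factor
  set t : ZMod M → ℕ := fun j => j.val / D' with htdef
  set L : ZMod D' → ZMod M := fun h => ((h.val : ℕ) : ZMod M) with hLdef
  set φ : ZMod M → ZMod D' := fun j => ((j.val : ℕ) : ZMod D') with hφdef
  have hLval : ∀ h : ZMod D', (L h).val = h.val := by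
    intro h
    simp only [hLdef]
    exact ZMod.val_natCast_of_lt (lt_of_lt_of_le (ZMod.val_lt h) hD'leM)
  have htL : ∀ h : ZMod D', t (L h) = 0 := by
    intro h
    simp only [htdef]
    rw [hLval h]
    exact Nat.div_eq_of_lt (ZMod.val_lt h)
  have hcastmod : ∀ x : ℕ, ((x % M : ℕ) : ZMod D') = (x : ZMod D') := by
    intro x
    conv_rhs => rw [← Nat.mod_add_div x M]
    push_cast
    rw [hMdef]
    push_cast
    simp [ZMod.natCast_self]
  have hφadd : ∀ a b : ZMod M, φ (a + b) = φ a + φ b := by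
    intro a b
    simp only [hφdef, ZMod.val_add]
    rw [hcastmod]
    push_cast
    ring
  have hφL : ∀ h : ZMod D', φ (L h) = h := by
    intro h
    simp only [hφdef]
    rw [hLval h]
    exact ZMod.natCast_rightInverse h
  have hLφ : ∀ j : ZMod M, L (φ j) = ((j.val % D' : ℕ) : ZMod M) := by
    intro j
    have h1 : (φ j).val = j.val % D' := by
      simp only [hφdef]
      exact ZMod.val_natCast _ j.val
    simp only [hLdef]
    rw [h1]
  -- the key congruence
  have hstar : ∀ (j k : ZMod M), t (j + k) ≡ t j + t (L (φ j) + k) [MOD m] := by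
    intro j k
    rw [hLφ j]
    simp only [htdef]
    exact star_lemma m D' hD' j k
  set w : ℤ × ℤ → ZMod D' → ℕ := fun v h => t (L h + c v) with hwdef
  -- the second factor system
  set S'₂ : ℤ × ℤ → Y₂ × ZMod D' → Y₂ × ZMod D' :=
    fun v q => (Q (v - (w v q.2 : ℤ) • n₂) q.1, q.2 + φ (c v)) with hS'₂def
  set ξ'₂ : X × ZMod M → Y₂ × ZMod D' :=
    fun p => (Q (-(t p.2 : ℤ) • n₂) (ξ₂ p.1), φ p.2) with hξ'₂def
  have hS'₂meas : ∀ v, Measurable (S'₂ v) := by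
    intro v
    have : Measurable fun q : Y₂ × ZMod D' => Q (v - (w v q.2 : ℤ) • n₂) q.1 := by
      apply measurable_from_prod_countable_left
      intro h
      show Measurable fun y : Y₂ => Q (v - (w v h : ℤ) • n₂) y
      exact hQmeas _
    exact this.prodMk ((Measurable.of_discrete (f := fun h : ZMod D' => h + φ (c v))).comp
      measurable_snd)
  have hξ'₂meas : Measurable ξ'₂ := by
    have : Measurable fun p : X × ZMod M => Q (-(t p.2 : ℤ) • n₂) (ξ₂ p.1) := by
      apply measurable_from_prod_countable_left
      intro j
      show Measurable fun x : X => Q (-(t j : ℤ) • n₂) (ξ₂ x)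
      exact (hQmeas _).comp hξ₂.1
    exact this.prodMk ((Measurable.of_discrete (f := φ)).comp measurable_snd)
  set ν'₂ : Measure (Y₂ × ZMod D') := μ'.map ξ'₂ with hν'₂def
  haveI hν'₂prob : IsProbabilityMeasure ν'₂ := by
    rw [hν'₂def]; exact Measure.isProbabilityMeasure_map hξ'₂meas.aemeasurable
  -- congruence tool for Q-exponents
  have hQcongr : ∀ (v : ℤ × ℤ) (a b : ℤ), a ≡ b [ZMOD (m : ℤ)] →
      Q (v - a • n₂) = Q (v - b • n₂) :=
    fun v a b hab => act_congr_sub Q hQ0 hQadd n₂ (m : ℤ) hQm v a b hab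
  -- the a.e. equivariance of ξ'₂
  have heqv : ∀ v : ℤ × ℤ, ∀ᵐ p ∂μ', ξ'₂ (T' v p) = S'₂ v (ξ'₂ p) := by
    intro v
    filter_upwards [hliftμ _ (hξ₂Q v)] with p hp
    have hfib : φ (p.2 + c v) = φ p.2 + φ (c v) := hφadd _ _
    have hmain : Q (-(t (p.2 + c v) : ℤ) • n₂) (ξ₂ (T v p.1)) =
        Q (v - (w v (φ p.2) : ℤ) • n₂) (Q (-(t p.2 : ℤ) • n₂) (ξ₂ p.1)) := by
      rw [hp]
      have h1 : Q (-(t (p.2 + c v) : ℤ) • n₂) (Q v (ξ₂ p.1)) =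
          Q (v - (t (p.2 + c v) : ℤ) • n₂) (ξ₂ p.1) := by
        rw [show v - (t (p.2 + c v) : ℤ) • n₂ = -(t (p.2 + c v) : ℤ) • n₂ + v by
          rw [neg_smul, neg_add_eq_sub], hQadd]
        rfl
      have h2 : Q (v - (w v (φ p.2) : ℤ) • n₂) (Q (-(t p.2 : ℤ) • n₂) (ξ₂ p.1)) =
          Q (v - ((w v (φ p.2) : ℤ) + (t p.2 : ℤ)) • n₂) (ξ₂ p.1) := by
        rw [show v - ((w v (φ p.2) : ℤ) + (t p.2 : ℤ)) • n₂
            = (v - (w v (φ p.2) : ℤ) • n₂) + (-(t p.2 : ℤ)) • n₂ by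
          rw [add_smul, neg_smul]; abel, hQadd]
        rfl
      rw [h1, h2]
      have hcong : (t (p.2 + c v) : ℤ) ≡ (w v (φ p.2) : ℤ) + (t p.2 : ℤ) [ZMOD (m : ℤ)] := by
        have := hstar p.2 (c v)
        simp only [hwdef]
        have h := Int.natCast_modEq_iff.2 this
        push_cast at h ⊢
        calc (t (p.2 + c v) : ℤ) ≡ (t p.2 : ℤ) + (t (L (φ p.2) + c v) : ℤ) [ZMOD (m:ℤ)] := by
              exact_mod_cast h
          _ = (t (L (φ p.2) + c v) : ℤ) + (t p.2 : ℤ) := by ring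
      rw [hQcongr v _ _ hcong]
    rw [hξ'₂def, hS'₂def]
    simp only [hT'def]
    exact Prod.ext hmain hfib
  -- S'₂ is an exact action
  have hw0 : ∀ h : ZMod D', w 0 h = 0 := by
    intro h
    simp only [hwdef, hc0, add_zero]
    exact htL h
  have hS'₂act : IsMPAction ν'₂ S'₂ := by
    refine ⟨?_, ?_, ?_⟩
    · funext q
      show (Q (0 - (w 0 q.2 : ℤ) • n₂) q.1, q.2 + φ (c 0)) = q
      rw [hw0, hc0]
      simp only [Nat.cast_zero, zero_smul, sub_zero, hQ0]
      have : φ (0 : ZMod M) = 0 := by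
        simp only [hφdef, ZMod.val_zero]
        exact Nat.cast_zero
      rw [this, add_zero]
      simp
    · intro a b
      funext q
      rw [hS'₂def]
      simp only [Function.comp_apply]
      refine Prod.ext ?_ ?_
      · -- main coordinate
        simp only
        have hcomp : Q (a - (w a (q.2 + φ (c b)) : ℤ) • n₂)
            (Q (b - (w b q.2 : ℤ) • n₂) q.1) =
            Q ((a + b) - ((w a (q.2 + φ (c b)) : ℤ) + (w b q.2 : ℤ)) • n₂) q.1 := by
          rw [show (a + b) - ((w a (q.2 + φ (c b)) : ℤ) + (w b q.2 : ℤ)) • n₂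
              = (a - (w a (q.2 + φ (c b)) : ℤ) • n₂) + (b - (w b q.2 : ℤ) • n₂) by
            rw [add_smul]; abel, hQadd]
          rfl
        rw [hcomp]
        have hcong : ((w (a + b) q.2 : ℕ) : ℤ) ≡
            ((w a (q.2 + φ (c b)) : ℤ) + (w b q.2 : ℤ)) [ZMOD (m : ℤ)] := by
          have hj : L (q.2 + φ (c b)) = L (φ (L q.2 + c b)) := by
            congr 1
            rw [hφadd, hφL]
          have hstar' := hstar (L q.2 + c b) (c a)
          have hrw : w (a + b) q.2 = t ((L q.2 + c b) + c a) := by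
            simp only [hwdef, hcadd a b]; congr 1; ring
          have hrw2 : w a (q.2 + φ (c b)) = t (L (φ (L q.2 + c b)) + c a) := by
            simp only [hwdef]; rw [hj]
          have hrw3 : w b q.2 = t (L q.2 + c b) := by simp only [hwdef]
          rw [hrw, hrw2, hrw3]
          have h := Int.natCast_modEq_iff.2 hstar'
          push_cast at h ⊢
          calc ((t ((L q.2 + c b) + c a) : ℕ) : ℤ)
              ≡ (t (L q.2 + c b) : ℤ) + (t (L (φ (L q.2 + c b)) + c a) : ℤ)
                [ZMOD (m:ℤ)] := by exact_mod_cast h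
            _ = (t (L (φ (L q.2 + c b)) + c a) : ℤ) + (t (L q.2 + c b) : ℤ) := by ring
        rw [hQcongr (a + b) _ _ hcong]
      · simp only [hcadd a b, hφadd]
        ring
    · intro v
      have h1 : ν'₂.map (S'₂ v) = (μ'.map ξ'₂).map (S'₂ v) := by rw [hν'₂def]
      refine ⟨hS'₂meas v, ?_⟩
      rw [h1, Measure.map_map (hS'₂meas v) hξ'₂meas]
      have h2 : Measure.map (S'₂ v ∘ ξ'₂) μ' = Measure.map (ξ'₂ ∘ T' v) μ' := by
        apply Measure.map_congr
        filter_upwards [heqv v] with p hp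
        simp only [Function.comp_apply]
        rw [hp]
      rw [h2, ← Measure.map_map hξ'₂meas (hT'meas v), (hT'act.2.2 v).map_eq, hν'₂def]
  -- n₂ acts trivially (exactly!) on the second factor
  have hwn₂ : ∀ h : ZMod D', (w n₂ h : ℤ) ≡ 1 [ZMOD (m : ℤ)] := by
    intro h
    rcases Nat.eq_or_lt_of_le hm with h1 | h2
    · -- m = 1: everything is congruent mod 1
      have : (m : ℤ) = 1 := by omega
      rw [this]
      exact Int.modEq_one
    · -- m ≥ 2: compute w n₂ h = 1 exactly
      have hD'ltM : D' < M := by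
        have h1 : 1 * D' < m * D' := (Nat.mul_lt_mul_right hD').mpr (by omega)
        rw [one_mul] at h1
        exact h1
      have hval : ((D' : ℕ) : ZMod M).val = D' := ZMod.val_natCast_of_lt hD'ltM
      have hv := ZMod.val_lt h
      have h2D : 2 * D' ≤ m * D' := Nat.mul_le_mul_right D' (by omega)
      have hlt : (L h).val + ((D' : ℕ) : ZMod M).val < M := by
        rw [hLval h, hval]
        have h3 : h.val + D' < 2 * D' := by omega
        exact lt_of_lt_of_le h3 h2D
      have hvadd : (L h + ((D' : ℕ) : ZMod M)).val = h.val + D' := by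
        rw [ZMod.val_add, Nat.mod_eq_of_lt hlt, hLval h, hval]
      have hw1 : w n₂ h = 1 := by
        simp only [hwdef, hcn₂, htdef]
        rw [hvadd]
        exact Nat.div_eq_of_lt_le (by omega) (by omega)
      rw [hw1]
      exact_mod_cast Nat.ModEq.refl 1
  have htriv'₂ : S'₂ n₂ = id := by
    funext q
    rw [hS'₂def]
    simp only [id_eq]
    refine Prod.ext ?_ ?_
    · simp only
      have : Q (n₂ - (w n₂ q.2 : ℤ) • n₂) = Q (n₂ - (1 : ℤ) • n₂) :=
        hQcongr n₂ _ _ (hwn₂ q.2)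
      rw [this]
      simp [hQ0]
    · simp only [hcn₂]
      have : φ ((D' : ℕ) : ZMod M) = 0 := by
        simp only [hφdef]
        rw [ZMod.val_natCast, hcastmod]
        simp [ZMod.natCast_self]
      rw [this, add_zero]
  have hξ'₂fac : IsFactorMap μ' T' ν'₂ S'₂ ξ'₂ :=
    ⟨hξ'₂meas, ⟨hξ'₂meas, rfl⟩, heqv⟩
  -- the generation property
  have hgen' : GeneratesPair μ' ξ'₁ ξ'₂ := by
    intro A hA
    have hslice : ∀ j : ZMod M, MeasurableSet {x | (x, j) ∈ A} :=
      fun j => measurable_prodMk_right hA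
    choose A' hmem hnull using fun j => hgen _ (hslice j)
    set SG : MeasurableSpace (X × ZMod M) :=
      MeasurableSpace.comap ξ'₁ inferInstance ⊔ MeasurableSpace.comap ξ'₂ inferInstance
      with hSGdef
    set B : Set (X × ZMod M) := ⋃ j : ZMod M, (A' j) ×ˢ ({j} : Set (ZMod M)) with hBdef
    have hBmem : ∀ (x : X) (i : ZMod M), ((x, i) ∈ B) ↔ x ∈ A' i := by
      intro x i
      rw [hBdef]
      simp only [Set.mem_iUnion, Set.mem_prod, Set.mem_singleton_iff]
      constructor
      · rintro ⟨j, hj, rfl⟩; exact hj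
      · intro h; exact ⟨i, h, rfl⟩
    have hbox : ∀ j : ZMod M, MeasurableSet[SG] (Set.univ ×ˢ ({j} : Set (ZMod M))) := by
      intro j
      have h1 : MeasurableSet[MeasurableSpace.comap ξ'₁ inferInstance]
          ((Set.univ : Set X) ×ˢ ({j} : Set (ZMod M))) := by
        rw [MeasurableSpace.measurableSet_comap]
        refine ⟨(Set.univ : Set Y₁) ×ˢ ({j} : Set (ZMod M)),
          MeasurableSet.univ.prod (MeasurableSet.singleton j), ?_⟩
        ext ⟨x, i⟩
        simp [hξ'₁def]
      exact (le_sup_left : _ ≤ SG) _ h1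
    have key : ∀ (j : ZMod M) (C : Set X),
        MeasurableSet[MeasurableSpace.comap ξ₁ inferInstance ⊔
          MeasurableSpace.comap ξ₂ inferInstance] C →
        MeasurableSet[SG] (C ×ˢ ({j} : Set (ZMod M))) := by
      intro j C hC
      set ι : X → X × ZMod M := fun x => (x, j) with hιdef
      have hsub : (MeasurableSpace.comap ξ₁ inferInstance ⊔
          MeasurableSpace.comap ξ₂ inferInstance) ≤ SG.comap ι := by
        refine sup_le ?_ ?_
        · have hfact : ξ₁ = Prod.fst ∘ (ξ'₁ ∘ ι) := rfl
          calc MeasurableSpace.comap ξ₁ inferInstance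
              = MeasurableSpace.comap ι (MeasurableSpace.comap ξ'₁
                  (MeasurableSpace.comap Prod.fst inferInstance)) := by
                rw [MeasurableSpace.comap_comp, MeasurableSpace.comap_comp, ← hfact]
            _ ≤ MeasurableSpace.comap ι SG := by
                apply MeasurableSpace.comap_mono
                have h1 : MeasurableSpace.comap (Prod.fst : Y₁ × ZMod M → Y₁) inferInstance ≤
                    (inferInstance : MeasurableSpace (Y₁ × ZMod M)) := measurable_fst.comap_le
                have h2 := MeasurableSpace.comap_mono (g := ξ'₁) h1
                rw [hSGdef]
                exact le_trans h2 le_sup_left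
        · have hfact : ξ₂ = (Q ((t j : ℤ) • n₂) ∘ Prod.fst) ∘ (ξ'₂ ∘ ι) := by
            funext x
            simp only [Function.comp_apply, hξ'₂def, hιdef]
            calc ξ₂ x = Q 0 (ξ₂ x) := by rw [hQ0]; rfl
              _ = Q ((t j : ℤ) • n₂ + (-(t j : ℤ)) • n₂) (ξ₂ x) := by
                  rw [show (t j : ℤ) • n₂ + (-(t j : ℤ)) • n₂ = 0 by
                    rw [neg_smul, add_neg_cancel]]
              _ = Q ((t j : ℤ) • n₂) (Q (-(t j : ℤ) • n₂) (ξ₂ x)) := by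
                  rw [hQadd]; rfl
          calc MeasurableSpace.comap ξ₂ inferInstance
              = MeasurableSpace.comap ι (MeasurableSpace.comap ξ'₂
                  (MeasurableSpace.comap (Q ((t j : ℤ) • n₂) ∘ Prod.fst) inferInstance)) := by
                rw [MeasurableSpace.comap_comp, MeasurableSpace.comap_comp, ← hfact]
            _ ≤ MeasurableSpace.comap ι SG := by
                apply MeasurableSpace.comap_mono
                have h1 : MeasurableSpace.comap
                    (Q ((t j : ℤ) • n₂) ∘ (Prod.fst : Y₂ × ZMod D' → Y₂)) inferInstance ≤
                    (inferInstance : MeasurableSpace (Y₂ × ZMod D')) :=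
                  ((hQmeas _).comp measurable_fst).comap_le
                have h2 := MeasurableSpace.comap_mono (g := ξ'₂) h1
                rw [hSGdef]
                exact le_trans h2 le_sup_right
      have hC' : MeasurableSet[SG.comap ι] C := hsub _ hC
      obtain ⟨SC, hSC, hpre⟩ := MeasurableSpace.measurableSet_comap.1 hC'
      have hCeq : C ×ˢ ({j} : Set (ZMod M)) = SC ∩ (Set.univ ×ˢ ({j} : Set (ZMod M))) := by
        ext ⟨x, i⟩
        simp only [Set.mem_prod, Set.mem_singleton_iff, Set.mem_inter_iff, Set.mem_univ,
          true_and]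
        constructor
        · rintro ⟨hx, rfl⟩
          refine ⟨?_, rfl⟩
          rw [← hpre] at hx
          exact hx
        · rintro ⟨hx, rfl⟩
          refine ⟨?_, rfl⟩
          rw [← hpre]
          exact hx
      rw [hCeq]
      exact hSC.inter (hbox j)
    refine ⟨B, ?_, ?_⟩
    · rw [hBdef]
      exact MeasurableSet.iUnion fun j => key j (A' j) (hmem j)
    · have hsub : symmDiff A B ⊆
          ⋃ j : ZMod M, (symmDiff {x | (x, j) ∈ A} (A' j)) ×ˢ ({j} : Set (ZMod M)) := by
        rintro ⟨x, i⟩ hxi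
        refine Set.mem_iUnion.2 ⟨i, ?_⟩
        rw [Set.mem_symmDiff] at hxi
        simp only [Set.mem_prod, Set.mem_singleton_iff, and_true]
        rw [Set.mem_symmDiff]
        rcases hxi with ⟨hA1, hB1⟩ | ⟨hB1, hA1⟩
        · exact Or.inl ⟨hA1, fun h => hB1 ((hBmem x i).2 h)⟩
        · exact Or.inr ⟨(hBmem x i).1 hB1, hA1⟩
      refine le_antisymm ?_ (zero_le)
      refine le_trans (measure_mono hsub) ?_
      rw [show (0 : ENNReal) = 0 from rfl]
      refine le_of_eq (measure_iUnion_null fun j => ?_)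
      rw [hμ'def, Measure.prod_prod, hnull j, zero_mul]
  -- assembling everything
  haveI hμ'prob : IsProbabilityMeasure μ' := by rw [hμ'def]; infer_instance
  haveI hν'₁prob : IsProbabilityMeasure ν'₁ := by rw [hν'₁def]; infer_instance
  have hρfac : IsFactorMap μ' T' μ T Prod.fst := by
    refine ⟨measurable_fst, ⟨measurable_fst, ?_⟩, fun v => ae_of_all _ fun p => rfl⟩
    rw [hμ'def]; simp [Measure.map_fst_prod, hκuniv]
  refine ⟨X × ZMod M, inferInstance, inferInstance, μ', hμ'prob, T',
    Y₁ × ZMod M, inferInstance, inferInstance, ν'₁, hν'₁prob, S'₁,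
    Y₂ × ZMod D', inferInstance, inferInstance, ν'₂, hν'₂prob, S'₂,
    ξ'₁, ξ'₂, Prod.fst,
    hT'act, hS'₁act, hS'₂act, htriv'₁, ae_of_all _ fun q => by rw [htriv'₂]; rfl,
    hξ'₁fac, hξ'₂fac, hgen', hρfac⟩
end

section
/- Let (X,μ,T) be a ℤ²-system and let p₁,p₂,p₃ ∈ ℤ² be in general position with the origin. Let μ^F be the Furstenberg self-joining of (X,μ,T) associated to T^{p₁}, T^{p₂}, T^{p₃}, i.e. the weak limit on X³ of (1/N)·Σ_{n=1}^N (T^{np₁}×T^{np₂}×T^{np₃})_*μ_Δ, where μ_Δ is the diagonal copy of μ (this limit exists). Then under μ^F the three factors ζ₀^{T^{p₁}=T^{p₂}}∘π₁, ζ₀^{T^{p₁}=T^{p₃}}∘π₁ and ζ₀^{T^{p₂}=T^{p₃}}∘π₂ are relatively independent over the common factor ζ₀^{T^{p₁}=T^{p₂}=T^{p₃}}: for all bounded measurable f₁₂ that is T^{p₁−p₂}-invariant, f₁₃ that is T^{p₁−p₃}-invariant and f₂₃ that is T^{p₂−p₃}-invariant, one has ∫_{X³}(f₁₂∘π₁)(f₁₃∘π₃)(f₂₃∘π₂)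 dμ^F = ∫_{X³}(E_μ(f₁₂|I)∘π₁)(E_μ(f₁₃|I)∘π₃)(E_μ(f₂₃|I)∘π₂) dμ^F, where I is the σ-algebra of sets invariant under both T^{p₁−p₂} and T^{p₁−p₃}. (Moreover, under μ^F one has ζ₀^{T^{p_i}=T^{p_j}}∘π_i = ζ₀^{T^{p_i}=T^{p_j}}∘π_j modulo null sets.) -/
open MeasureTheory Filter

/-- Three points of `ℤ²` are collinear. -/
def Collin (a b c : ℤ × ℤ) : Prop :=
  (b.1 - a.1) * (c.2 - a.2) = (b.2 - a.2) * (c.1 - a.1)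

/-- `p₁, p₂, p₃` are in general position with the origin: no three of `0, p₁, p₂, p₃`
lie on a line. -/
def GeneralPosition (p₁ p₂ p₃ : ℤ × ℤ) : Prop :=
  ¬Collin 0 p₁ p₂ ∧ ¬Collin 0 p₁ p₃ ∧ ¬Collin 0 p₂ p₃ ∧ ¬Collin p₁ p₂ p₃

/-- The σ-algebra of sets invariant under both `T a` and `T b`. -/
def jointInvAlg {X : Type} [MeasurableSpace X] (T : ℤ × ℤ → X → X) (a b : ℤ × ℤ) :
    MeasurableSpace X :=
  MeasurableSpace.generateFrom {A : Set X | MeasurableSet A ∧ T a ⁻¹' A = A ∧ T b ⁻¹' A = A}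

open Topology

lemma sum_Icc_one {M : Type*} [AddCommMonoid M] (f : ℕ → M) (N : ℕ) :
    ∑ n ∈ Finset.Icc 1 N, f n = ∑ k ∈ Finset.range N, f (k + 1) := by
  induction N with
  | zero => simp
  | succ N ih => rw [Finset.sum_Icc_succ_top (by omega), ih, Finset.sum_range_succ]


lemma avg_const_tendsto (r : ℝ) (u : ℕ → ℝ) (hu : ∀ n, 1 ≤ n → u n = r) :
    Filter.Tendsto (fun N : ℕ => (N : ℝ)⁻¹ * ∑ n ∈ Finset.Icc 1 N, u n)
      Filter.atTop (𝓝 r) := by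
  apply Filter.Tendsto.congr' _ (tendsto_const_nhds (x := r))
  filter_upwards [Filter.eventually_ge_atTop 1] with N hN
  have h1 : ∑ n ∈ Finset.Icc 1 N, u n = (N : ℝ) * r := by
    have h2 : ∑ n ∈ Finset.Icc 1 N, u n = ∑ _n ∈ Finset.Icc 1 N, r :=
      Finset.sum_congr rfl fun n hn => hu n (Finset.mem_Icc.1 hn).1
    rw [h2, Finset.sum_const, Nat.card_Icc, nsmul_eq_mul]
    push_cast
    ring
  rw [h1, ← mul_assoc, inv_mul_cancel₀ (by positivity), one_mul]


lemma int_bdd_gen {α : Type*} [MeasurableSpace α] {ν : MeasureTheory.Measure α}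
    [IsFiniteMeasure ν] {f : α → ℝ} (hm : Measurable f) {c : ℝ} (hb : ∀ x, |f x| ≤ c) :
    Integrable f ν :=
  memLp_one_iff_integrable.1 <| MemLp.of_bound hm.aestronglyMeasurable c
    (Filter.Eventually.of_forall fun x => by rw [Real.norm_eq_abs]; exact hb x)

namespace SubchAux
set_option linter.unusedSectionVars false
variable {X : Type} [MeasurableSpace X] {μ : Measure X} {T : ℤ × ℤ → X → X}


section basic

variable (hT : IsMPAction μ T)
include hT

lemma mp (n : ℤ × ℤ) : MeasurePreserving (T n) μ μ := hT.2.2 n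

lemma T_comp (m n : ℤ × ℤ) : T m ∘ T n = T (m + n) := (hT.2.1 m n).symm

lemma T_cancel (n : ℤ × ℤ) : T n ∘ T (-n) = id := by
  rw [T_comp hT, add_neg_cancel, hT.1]

lemma T_cancel' (n : ℤ × ℤ) (x : X) : T n (T (-n) x) = x := by
  have := congrFun (T_cancel hT n) x
  simpa using this

/-- `T n` as a measurable equivalence. -/
noncomputable def Teq (n : ℤ × ℤ) : X ≃ᵐ X where
  toFun := T n
  invFun := T (-n)
  left_inv := fun x => by
    have := congrFun (T_cancel hT (-n)) x; simpa using this
  right_inv := fun x => T_cancel' hT n x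
  measurable_toFun := (mp hT n).measurable
  measurable_invFun := (mp hT (-n)).measurable

lemma integral_comp_T (n : ℤ × ℤ) (g : X → ℝ) :
    ∫ x, g (T n x) ∂μ = ∫ x, g x ∂μ :=
  MeasurePreserving.integral_comp' (f := Teq hT n) (mp hT n) g

/-- literal invariance propagates to all multiples -/
lemma inv_neg {α : Type*} {f : X → α} {c : ℤ × ℤ} (hf : f ∘ T c = f) :
    f ∘ T (-c) = f := by
  conv_lhs => rw [← hf]
  funext x
  simp [Function.comp, T_cancel' hT c x]

lemma inv_zsmul {α : Type*} {f : X → α} {c : ℤ × ℤ} (hf : f ∘ T c = f) (k : ℤ) :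
    f ∘ T (k • c) = f := by
  induction k using Int.induction_on with
  | zero => simp [hT.1]
  | succ n ih =>
      have : ((n : ℤ) + 1) • c = c + (n : ℤ) • c := by
        rw [add_smul, one_smul, add_comm]
      rw [this, ← T_comp hT, ← Function.comp_assoc, hf, ih]
  | pred n ih =>
      have : (-(n : ℤ) - 1) • c = -c + (-(n : ℤ)) • c := by
        rw [sub_smul, one_smul, neg_smul, neg_add_eq_sub, sub_eq_add_neg, add_comm]
      rw [this, ← T_comp hT, ← Function.comp_assoc, inv_neg hT hf, ih]

lemma ae_comp {f g : X → ℝ} (h : f =ᵐ[μ] g) (n : ℤ × ℤ) :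
    f ∘ T n =ᵐ[μ] g ∘ T n :=
  (mp hT n).quasiMeasurePreserving.ae_eq_comp h

lemma ae_inv_neg {f : X → ℝ} {c : ℤ × ℤ} (hf : f ∘ T c =ᵐ[μ] f) :
    f ∘ T (-c) =ᵐ[μ] f := by
  have h1 : (f ∘ T c) ∘ T (-c) =ᵐ[μ] f ∘ T (-c) := ae_comp hT hf (-c)
  have h2 : (f ∘ T c) ∘ T (-c) = f := by
    funext x; simp [Function.comp, T_cancel' hT c x]
  rw [h2] at h1
  exact h1.symm

lemma ae_inv_add {f : X → ℝ} {c d : ℤ × ℤ} (hc : f ∘ T c =ᵐ[μ] f)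
    (hd : f ∘ T d =ᵐ[μ] f) : f ∘ T (c + d) =ᵐ[μ] f := by
  rw [← T_comp hT, ← Function.comp_assoc]
  calc (f ∘ T c) ∘ T d =ᵐ[μ] f ∘ T d := ae_comp hT hc d
  _ =ᵐ[μ] f := hd

lemma ae_inv_zsmul {f : X → ℝ} {c : ℤ × ℤ} (hf : f ∘ T c =ᵐ[μ] f) (k : ℤ) :
    f ∘ T (k • c) =ᵐ[μ] f := by
  induction k using Int.induction_on with
  | zero => simp [hT.1]
  | succ n ih =>
      have : ((n : ℤ) + 1) • c = (n : ℤ) • c + c := by rw [add_smul, one_smul]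
      rw [this]; exact ae_inv_add hT ih hf
  | pred n ih =>
      have : (-(n : ℤ) - 1) • c = (-(n : ℤ)) • c + -c := by
        rw [sub_smul, one_smul, neg_smul, sub_eq_add_neg]
      rw [this]; exact ae_inv_add hT ih (ae_inv_neg hT hf)

end basic


lemma measurableSet_joint {a b : ℤ × ℤ} {s : Set X} :
    MeasurableSet[jointInvAlg T a b] s ↔
      MeasurableSet s ∧ T a ⁻¹' s = s ∧ T b ⁻¹' s = s := by
  constructor
  · intro hs
    induction s, hs using MeasurableSpace.generateFrom_induction with
    | hC t ht _ => exact ht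
    | empty => simp
    | compl t ht iht =>
        exact ⟨iht.1.compl, by rw [Set.preimage_compl, iht.2.1],
          by rw [Set.preimage_compl, iht.2.2]⟩
    | iUnion f hf ihf =>
        exact ⟨MeasurableSet.iUnion fun n => (ihf n).1,
          by rw [Set.preimage_iUnion]; exact Set.iUnion_congr fun n => (ihf n).2.1,
          by rw [Set.preimage_iUnion]; exact Set.iUnion_congr fun n => (ihf n).2.2⟩
  · intro hs
    exact MeasurableSpace.measurableSet_generateFrom hs


section withT
variable (hT : IsMPAction μ T)
include hT

lemma Tapp (u v : ℤ × ℤ) (x : X) : T u (T v x) = T (u + v) x :=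
  (congrFun (hT.2.1 u v) x).symm


/-- Lemma A : an a.e. invariant function has a jointInvAlg-measurable version. -/
lemma exists_joint_version {a b : ℤ × ℤ} {f : X → ℝ} (hfm : Measurable f)
    (ha : f ∘ T a =ᵐ[μ] f) (hb : f ∘ T b =ᵐ[μ] f) :
    ∃ g : X → ℝ, Measurable[jointInvAlg T a b] g ∧ g =ᵐ[μ] f := by
  classical
  set E : Set X := {x | ∀ k l : ℤ, f (T (k • a + l • b) x) = f x} with hE
  have hTm : ∀ n : ℤ × ℤ, Measurable (T n) := fun n => (mp hT n).measurable
  have hEm : MeasurableSet E := by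
    have hrw : E = ⋂ (k : ℤ) (l : ℤ), {x | f (T (k • a + l • b) x) = f x} := by
      ext x; simp [hE]
    rw [hrw]
    exact MeasurableSet.iInter fun k => MeasurableSet.iInter fun l =>
      measurableSet_eq_fun (hfm.comp (hTm _)) hfm
  have hEae : ∀ᵐ x ∂μ, x ∈ E := by
    have h1 : ∀ k l : ℤ, ∀ᵐ x ∂μ, f (T (k • a + l • b) x) = f x := fun k l =>
      ae_inv_add hT (ae_inv_zsmul hT ha k) (ae_inv_zsmul hT hb l)
    have h2 : ∀ᵐ x ∂μ, ∀ k l : ℤ, f (T (k • a + l • b) x) = f x :=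
      ae_all_iff.2 fun k => ae_all_iff.2 fun l => h1 k l
    exact h2
  -- membership is invariant under the subgroup generated by a, b
  have hfwd : ∀ x ∈ E, ∀ k l : ℤ, T (k • a + l • b) x ∈ E := by
    intro x hx k l k' l'
    have e1 : T (k' • a + l' • b) (T (k • a + l • b) x)
        = T ((k' + k) • a + (l' + l) • b) x := by
      rw [Tapp hT]
      congr 1
      rw [add_smul, add_smul]
      abel
    rw [e1, hx, hx]
  have hmem : ∀ (k l : ℤ) (x : X), x ∈ E ↔ T (k • a + l • b) x ∈ E := by
    intro k l x
    refine ⟨fun hx => hfwd x hx k l, fun hx => ?_⟩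
    have e1 : T ((-k) • a + (-l) • b) (T (k • a + l • b) x) = x := by
      rw [Tapp hT]
      have e2 : (-k) • a + (-l) • b + (k • a + l • b) = (0 : ℤ × ℤ) := by
        rw [neg_smul, neg_smul]; abel
      rw [e2, hT.1]; rfl
    have := hfwd _ hx (-k) (-l)
    rwa [e1] at this
  have hpre : ∀ (k l : ℤ), T (k • a + l • b) ⁻¹' E = E := by
    intro k l
    ext x
    exact (hmem k l x).symm
  have hprea : T a ⁻¹' E = E := by
    have := hpre 1 0
    simpa using this
  have hpreb : T b ⁻¹' E = E := by
    have := hpre 0 1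
    simpa using this
  -- the invariant version
  refine ⟨E.indicator f, ?_, ?_⟩
  · intro t ht
    refine measurableSet_joint.2 ⟨(hfm.indicator hEm) ht, ?_, ?_⟩
    · have hga : E.indicator f ∘ T a = E.indicator f := by
        funext x
        by_cases hx : x ∈ E
        · have hx' : T a x ∈ E := by rw [← hprea] at hx; exact hx
          simp only [Function.comp_apply, Set.indicator_of_mem hx, Set.indicator_of_mem hx']
          have : f (T a x) = f x := by
            have h1 := hx' -- use hx : x ∈ E at (1,0)
            have h2 := hx 1 0
            have e : (1 : ℤ) • a + (0 : ℤ) • b = a := by simp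
            rw [e] at h2
            exact h2
          exact this
        · have hx' : ¬ T a x ∈ E := by rw [← hprea] at hx; exact hx
          simp [Set.indicator_of_notMem hx, Set.indicator_of_notMem hx']
      rw [← Set.preimage_comp, hga]
    · have hgb : E.indicator f ∘ T b = E.indicator f := by
        funext x
        by_cases hx : x ∈ E
        · have hx' : T b x ∈ E := by rw [← hpreb] at hx; exact hx
          simp only [Function.comp_apply, Set.indicator_of_mem hx, Set.indicator_of_mem hx']
          have h2 := hx 0 1
          have e : (0 : ℤ) • a + (1 : ℤ) • b = b := by simp
          rw [e] at h2
          exact h2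
        · have hx' : ¬ T b x ∈ E := by rw [← hpreb] at hx; exact hx
          simp [Set.indicator_of_notMem hx, Set.indicator_of_notMem hx']
      rw [← Set.preimage_comp, hgb]
  · filter_upwards [hEae] with x hx
    exact Set.indicator_of_mem hx f

lemma preimage_neg {s : Set X} {u : ℤ × ℤ} (h : T u ⁻¹' s = s) : T (-u) ⁻¹' s = s := by
  conv_lhs => rw [← h]
  ext x
  simp [T_cancel' hT u x]

lemma preimage_add {s : Set X} {u v : ℤ × ℤ} (hu : T u ⁻¹' s = s) (hv : T v ⁻¹' s = s) :
    T (u + v) ⁻¹' s = s := by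
  have : T (u + v) ⁻¹' s = T v ⁻¹' (T u ⁻¹' s) := by
    rw [← Set.preimage_comp, ← hT.2.1 u v]
  rw [this, hu, hv]

/-- jointInvAlg sets are invariant under `a`, `b`, and the four combinations we need. -/
lemma joint_inv_a {a b : ℤ × ℤ} {s : Set X} (hs : MeasurableSet[jointInvAlg T a b] s) :
    T a ⁻¹' s = s := (measurableSet_joint.1 hs).2.1

lemma joint_inv_b {a b : ℤ × ℤ} {s : Set X} (hs : MeasurableSet[jointInvAlg T a b] s) :
    T b ⁻¹' s = s := (measurableSet_joint.1 hs).2.2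

lemma joint_inv_sub {a b : ℤ × ℤ} {s : Set X} (hs : MeasurableSet[jointInvAlg T a b] s) :
    T (a - b) ⁻¹' s = s := by
  rw [sub_eq_add_neg]
  exact preimage_add hT (joint_inv_a hT hs) (preimage_neg hT (joint_inv_b hT hs))

lemma joint_inv_sub' {a b : ℤ × ℤ} {s : Set X} (hs : MeasurableSet[jointInvAlg T a b] s) :
    T (b - a) ⁻¹' s = s := by
  rw [sub_eq_add_neg]
  exact preimage_add hT (joint_inv_b hT hs) (preimage_neg hT (joint_inv_a hT hs))


end withT


lemma joint_le {a b : ℤ × ℤ} : jointInvAlg T a b ≤ ‹MeasurableSpace X› :=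
  fun _s hs => (measurableSet_joint.1 hs).1


/-- a function measurable w.r.t. a σ-algebra of invariant sets is literally invariant. -/
lemma comp_eq_of_meas {m' : MeasurableSpace X} {g : X → ℝ} (hg : Measurable[m'] g)
    {u : ℤ × ℤ} (hinv : ∀ s : Set X, MeasurableSet[m'] s → T u ⁻¹' s = s) :
    g ∘ T u = g := by
  funext x
  have h1 : MeasurableSet[m'] (g ⁻¹' {g x}) := hg (measurableSet_singleton _)
  have h2 := hinv _ h1
  have : x ∈ T u ⁻¹' (g ⁻¹' {g x}) := by rw [h2]; exact rfl
  exact this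


section prob
variable [IsProbabilityMeasure μ]


noncomputable def koop (hT : IsMPAction μ T) (c : ℤ × ℤ) : Lp ℝ 2 μ →L[ℝ] Lp ℝ 2 μ :=
  LinearMap.mkContinuous
    { toFun := Lp.compMeasurePreserving (T c) (hT.2.2 c)
      map_add' := fun f g => map_add _ f g
      map_smul' := fun r f => by
        refine Lp.ext ?_
        filter_upwards [Lp.coeFn_compMeasurePreserving (r • f) (hT.2.2 c),
          (hT.2.2 c).quasiMeasurePreserving.ae_eq_comp (Lp.coeFn_smul r f),
          Lp.coeFn_smul r (Lp.compMeasurePreserving (T c) (hT.2.2 c) f),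
          (hT.2.2 c).quasiMeasurePreserving.ae_eq_comp
            (ae_eq_refl (⇑f)),
          Lp.coeFn_compMeasurePreserving f (hT.2.2 c)] with x h1 h2 h3 _ h5
        rw [h1, h2, RingHom.id_apply, h3]
        simp only [Pi.smul_apply, smul_eq_mul, h5]
        rfl }
    1 (fun f => by simp [Lp.norm_compMeasurePreserving])

lemma koop_coe (hT : IsMPAction μ T) (c : ℤ × ℤ) (g : Lp ℝ 2 μ) :
    ⇑(koop hT c g) =ᵐ[μ] ⇑g ∘ T c :=
  Lp.coeFn_compMeasurePreserving g (hT.2.2 c)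

lemma koop_norm (hT : IsMPAction μ T) (c : ℤ × ℤ) : ‖koop hT c‖ ≤ 1 :=
  LinearMap.mkContinuous_norm_le _ zero_le_one _

example (hT : IsMPAction μ T) (c : ℤ × ℤ) (g : Lp ℝ 2 μ) :
    Tendsto (birkhoffAverage ℝ (koop hT c) _root_.id · g) atTop
      (𝓝 <| (Submodule.orthogonalProjectionOnto ((koop hT c).eqLocus (1 : Lp ℝ 2 μ →L[ℝ] Lp ℝ 2 μ)) g : Lp ℝ 2 μ)) :=
  ContinuousLinearMap.tendsto_birkhoffAverage_orthogonalProjection (koop hT c) (koop_norm hT c) g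

example (A g : Lp ℝ 2 μ) : @inner ℝ _ _ A g = ∫ x, A x * g x ∂μ := by
  rw [L2.inner_def]
  exact integral_congr_ae (Filter.Eventually.of_forall fun x => Real.inner_apply _ _)
lemma sum_Icc_one' {M : Type*} [AddCommMonoid M] (f : ℕ → M) (N : ℕ) :
    ∑ n ∈ Finset.Icc 1 N, f n = ∑ k ∈ Finset.range N, f (k + 1) := by
  induction N with
  | zero => simp
  | succ N ih => rw [Finset.sum_Icc_succ_top (by omega), ih, Finset.sum_range_succ]

lemma int_bdd {f : X → ℝ} (hm : Measurable f) {c : ℝ} (hb : ∀ x, |f x| ≤ c) :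
    Integrable f μ :=
  memLp_one_iff_integrable.1 <| MemLp.of_bound hm.aestronglyMeasurable c
    (Filter.Eventually.of_forall fun x => by rw [Real.norm_eq_abs]; exact hb x)

lemma memL2_bdd {f : X → ℝ} (hm : Measurable f) {c : ℝ} (hb : ∀ x, |f x| ≤ c) :
    MemLp f 2 μ :=
  MemLp.of_bound hm.aestronglyMeasurable c
    (Filter.Eventually.of_forall fun x => by rw [Real.norm_eq_abs]; exact hb x)

/-- The core mean-ergodic lemma. -/
lemma core (hT : IsMPAction μ T) (c d : ℤ × ℤ) {B : X → ℝ} (hBm : Measurable B)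
    {cB : ℝ} (hBb : ∀ x, |B x| ≤ cB) (hBd : B ∘ T d =ᵐ[μ] B) :
    ∃ H : X → ℝ, Measurable H ∧ Integrable H μ ∧ (H ∘ T c =ᵐ[μ] H) ∧ (H ∘ T d =ᵐ[μ] H) ∧
      (∀ A : X → ℝ, Measurable A → (∃ cA : ℝ, ∀ x, |A x| ≤ cA) →
        Tendsto (fun N : ℕ => (N : ℝ)⁻¹ * ∑ n ∈ Finset.Icc 1 N,
            ∫ x, A x * B (T ((n : ℤ) • c) x) ∂μ) atTop (𝓝 (∫ x, A x * H x ∂μ))) ∧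
      (∀ φ : X → ℝ, Measurable φ → (∃ cφ : ℝ, ∀ x, |φ x| ≤ cφ) → φ ∘ T c = φ →
        ∫ x, φ x * H x ∂μ = ∫ x, φ x * B x ∂μ) := by
  have hB2 : MemLp B 2 μ := memL2_bdd hBm hBb
  set Bl : Lp ℝ 2 μ := hB2.toLp B with hBl
  set U : Lp ℝ 2 μ →L[ℝ] Lp ℝ 2 μ := koop hT c with hU
  set V : Lp ℝ 2 μ →L[ℝ] Lp ℝ 2 μ := koop hT d with hV
  set Pl : Lp ℝ 2 μ := ↑(Submodule.orthogonalProjectionOnto (U.eqLocus (1 : Lp ℝ 2 μ →L[ℝ] Lp ℝ 2 μ)) Bl) with hPl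
  have htends : Tendsto (birkhoffAverage ℝ U _root_.id · Bl) atTop (𝓝 Pl) :=
    ContinuousLinearMap.tendsto_birkhoffAverage_orthogonalProjection U (koop_norm hT c) Bl
  have hfix : U Pl = Pl := by
    have h := (Submodule.orthogonalProjectionOnto (U.eqLocus (1 : Lp ℝ 2 μ →L[ℝ] Lp ℝ 2 μ)) Bl).2
    have h2 := LinearMap.mem_eqLocus.1 h
    simpa [hPl] using h2
  -- iterates of the Koopman operator
  have hiter : ∀ (n : ℕ) (g : Lp ℝ 2 μ),
      ⇑((⇑U)^[n] g) =ᵐ[μ] ⇑g ∘ T ((n : ℤ) • c) := by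
    intro n
    induction n with
    | zero =>
        intro g
        simp only [Function.iterate_zero, id_eq, Nat.cast_zero, zero_smul, hT.1]
        exact Filter.EventuallyEq.rfl
    | succ n ih =>
        intro g
        rw [Function.iterate_succ_apply]
        calc ⇑((⇑U)^[n] (U g)) =ᵐ[μ] ⇑(U g) ∘ T ((n : ℤ) • c) := ih (U g)
        _ =ᵐ[μ] (⇑g ∘ T c) ∘ T ((n : ℤ) • c) := ae_comp hT (koop_coe hT c g) _
        _ = ⇑g ∘ T (((n : ℕ) + 1 : ℤ) • c) := by
            rw [Function.comp_assoc, ← hT.2.1]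
            congr 2
            rw [add_smul, one_smul, add_comm]
        _ = ⇑g ∘ T (((n + 1 : ℕ) : ℤ) • c) := by push_cast; rfl
  -- the limit function
  obtain ⟨H, hHsm, hHae⟩ : ∃ H : X → ℝ, StronglyMeasurable H ∧ ⇑Pl =ᵐ[μ] H :=
    ⟨(Lp.aestronglyMeasurable Pl).mk _, (Lp.aestronglyMeasurable Pl).stronglyMeasurable_mk,
      (Lp.aestronglyMeasurable Pl).ae_eq_mk⟩
  have hHm : Measurable H := hHsm.measurable
  have hPint : Integrable (⇑Pl) μ := MemLp.integrable one_le_two (Lp.memLp Pl)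
  have hHint : Integrable H μ := hPint.congr hHae
  -- c-invariance
  have hinvc : H ∘ T c =ᵐ[μ] H := by
    calc H ∘ T c =ᵐ[μ] ⇑Pl ∘ T c := ae_comp hT hHae.symm c
    _ =ᵐ[μ] ⇑(U Pl) := (koop_coe hT c Pl).symm
    _ = ⇑Pl := by rw [hfix]
    _ =ᵐ[μ] H := hHae
  -- d-invariance
  have hVB : V Bl = Bl := by
    refine Lp.ext ?_
    calc ⇑(V Bl) =ᵐ[μ] ⇑Bl ∘ T d := koop_coe hT d Bl
    _ =ᵐ[μ] B ∘ T d := ae_comp hT (MemLp.coeFn_toLp hB2) d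
    _ =ᵐ[μ] B := hBd
    _ =ᵐ[μ] ⇑Bl := (MemLp.coeFn_toLp hB2).symm
  have hcomm : ∀ g : Lp ℝ 2 μ, V (U g) = U (V g) := by
    intro g
    refine Lp.ext ?_
    calc ⇑(V (U g)) =ᵐ[μ] ⇑(U g) ∘ T d := koop_coe hT d _
    _ =ᵐ[μ] (⇑g ∘ T c) ∘ T d := ae_comp hT (koop_coe hT c g) d
    _ = ⇑g ∘ T (c + d) := by rw [Function.comp_assoc, hT.2.1]
    _ = ⇑g ∘ T (d + c) := by rw [add_comm]
    _ = (⇑g ∘ T d) ∘ T c := by rw [Function.comp_assoc, hT.2.1]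
    _ =ᵐ[μ] ⇑(V g) ∘ T c := (ae_comp hT (koop_coe hT d g) c).symm
    _ =ᵐ[μ] ⇑(U (V g)) := (koop_coe hT c (V g)).symm
  have hVit : ∀ k : ℕ, V ((⇑U)^[k] Bl) = (⇑U)^[k] Bl := by
    intro k
    induction k with
    | zero => simpa using hVB
    | succ k ih =>
        rw [Function.iterate_succ_apply', hcomm, ih]
  have hVavg : ∀ N : ℕ, V (birkhoffAverage ℝ (⇑U) _root_.id N Bl)
      = birkhoffAverage ℝ (⇑U) _root_.id N Bl := by
    intro N
    simp only [birkhoffAverage, birkhoffSum, id_eq, _root_.map_smul, map_sum]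
    congr 1
    exact Finset.sum_congr rfl fun k _ => hVit k
  have hVP : V Pl = Pl := by
    have h1 : Tendsto (fun N => V (birkhoffAverage ℝ (⇑U) _root_.id N Bl)) atTop (𝓝 (V Pl)) :=
      (V.continuous.tendsto Pl).comp htends
    have h2 : Tendsto (fun N => V (birkhoffAverage ℝ (⇑U) _root_.id N Bl)) atTop (𝓝 Pl) := by
      apply htends.congr
      intro N
      exact (hVavg N).symm
    exact tendsto_nhds_unique h1 h2
  have hinvd : H ∘ T d =ᵐ[μ] H := by
    calc H ∘ T d =ᵐ[μ] ⇑Pl ∘ T d := ae_comp hT hHae.symm d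
    _ =ᵐ[μ] ⇑(V Pl) := (koop_coe hT d Pl).symm
    _ = ⇑Pl := by rw [hVP]
    _ =ᵐ[μ] H := hHae
  -- the tendsto statement
  have key2 : ∀ A : X → ℝ, Measurable A → (∃ cA : ℝ, ∀ x, |A x| ≤ cA) →
      Tendsto (fun N : ℕ => (N : ℝ)⁻¹ * ∑ n ∈ Finset.Icc 1 N,
          ∫ x, A x * B (T ((n : ℤ) • c) x) ∂μ) atTop (𝓝 (∫ x, A x * H x ∂μ)) := by
    rintro A hAm ⟨cA, hAb⟩
    have hA2 : MemLp A 2 μ := memL2_bdd hAm hAb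
    set Al : Lp ℝ 2 μ := hA2.toLp A with hAl
    have hinner : ∀ g : Lp ℝ 2 μ, @inner ℝ _ _ Al g = ∫ x, A x * g x ∂μ := by
      intro g
      rw [L2.inner_def]
      apply integral_congr_ae
      filter_upwards [MemLp.coeFn_toLp hA2] with x hx
      rw [RCLike.inner_apply', conj_trivial, hx]
    have hterm : ∀ n : ℕ, @inner ℝ _ _ Al ((⇑U)^[n] Bl)
        = ∫ x, A x * B (T ((n : ℤ) • c) x) ∂μ := by
      intro n
      rw [hinner]
      apply integral_congr_ae
      have h1 : ⇑((⇑U)^[n] Bl) =ᵐ[μ] B ∘ T ((n : ℤ) • c) :=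
        (hiter n Bl).trans (ae_comp hT (MemLp.coeFn_toLp hB2) _)
      filter_upwards [h1] with x hx
      rw [hx]
      rfl
    have hseq : ∀ N : ℕ, @inner ℝ _ _ Al (U (birkhoffAverage ℝ (⇑U) _root_.id N Bl))
        = (N : ℝ)⁻¹ * ∑ n ∈ Finset.Icc 1 N, ∫ x, A x * B (T ((n : ℤ) • c) x) ∂μ := by
      intro N
      simp only [birkhoffAverage, birkhoffSum, id_eq, _root_.map_smul, map_sum]
      rw [real_inner_smul_right, inner_sum]
      congr 1
      rw [sum_Icc_one']
      apply Finset.sum_congr rfl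
      intro k _
      rw [← Function.iterate_succ_apply' (⇑U) k Bl, hterm (k + 1)]
    have hlim : Tendsto (fun N => @inner ℝ _ _ Al (U (birkhoffAverage ℝ (⇑U) _root_.id N Bl)))
        atTop (𝓝 (@inner ℝ _ _ Al (U Pl))) := by
      have hcont : Continuous fun g : Lp ℝ 2 μ => @inner ℝ _ _ Al (U g) :=
        (innerSL ℝ Al).continuous.comp U.continuous
      exact (hcont.tendsto Pl).comp htends
    rw [hfix, hinner] at hlim
    have heq : ∫ x, A x * Pl x ∂μ = ∫ x, A x * H x ∂μ := by
      apply integral_congr_ae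
      filter_upwards [hHae] with x hx
      rw [hx]
    rw [heq] at hlim
    apply hlim.congr
    intro N
    exact hseq N
  refine ⟨H, hHm, hHint, hinvc, hinvd, key2, ?_⟩
  -- invariant test functions see no difference between H and B
  rintro φ hφm ⟨cφ, hφb⟩ hφinv
  have h1 : Tendsto (fun N : ℕ => (N : ℝ)⁻¹ * ∑ n ∈ Finset.Icc 1 N,
      ∫ x, φ x * B (T ((n : ℤ) • c) x) ∂μ) atTop (𝓝 (∫ x, φ x * H x ∂μ)) :=
    key2 φ hφm ⟨cφ, hφb⟩
  have h2 : Tendsto (fun N : ℕ => (N : ℝ)⁻¹ * ∑ n ∈ Finset.Icc 1 N,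
      ∫ x, φ x * B (T ((n : ℤ) • c) x) ∂μ) atTop (𝓝 (∫ x, φ x * B x ∂μ)) := by
    apply avg_const_tendsto
    intro n _
    have h3 : (fun x => φ x * B (T ((n : ℤ) • c) x))
        = fun x => (fun y => φ y * B y) (T ((n : ℤ) • c) x) := by
      funext x
      have h4 := congrFun (inv_zsmul hT hφinv (n : ℤ)) x
      simp only [Function.comp_apply] at h4
      rw [← h4]
    rw [h3]
    exact integral_comp_T hT ((n : ℤ) • c) fun y => φ y * B y
  exact tendsto_nhds_unique h1 h2



/-- Identification of the limit function with the conditional expectation. -/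
lemma ident (hT : IsMPAction μ T) {a b cdir : ℤ × ℤ}
    (hc : ∀ s : Set X, MeasurableSet[jointInvAlg T a b] s → T cdir ⁻¹' s = s)
    {B H : X → ℝ} (hBm : Measurable B) {cB : ℝ} (hBb : ∀ x, |B x| ≤ cB)
    (hHm : Measurable H) (hHint : Integrable H μ)
    (hHa : H ∘ T a =ᵐ[μ] H) (hHb : H ∘ T b =ᵐ[μ] H)
    (h3 : ∀ φ : X → ℝ, Measurable φ → (∃ cφ : ℝ, ∀ x, |φ x| ≤ cφ) → φ ∘ T cdir = φ →
      ∫ x, φ x * H x ∂μ = ∫ x, φ x * B x ∂μ) :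
    H =ᵐ[μ] μ[B | jointInvAlg T a b] := by
  obtain ⟨g, hgm, hgae⟩ := exists_joint_version hT hHm hHa hHb
  have hm : jointInvAlg T a b ≤ _ := joint_le
  have hBint : Integrable B μ := int_bdd hBm hBb
  have hgB : g =ᵐ[μ] μ[B | jointInvAlg T a b] := by
    refine ae_eq_condExp_of_forall_setIntegral_eq hm hBint ?_ ?_ ?_
    · intro s _ _
      exact (hHint.congr hgae.symm).integrableOn
    · intro s hs _
      have hsm : MeasurableSet s := hm s hs
      set φ : X → ℝ := s.indicator (fun _ => (1 : ℝ)) with hφ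
      have hφm : Measurable φ := measurable_const.indicator hsm
      have hφb : ∀ x, |φ x| ≤ 1 := by
        intro x
        by_cases hx : x ∈ s <;> simp [hφ, hx]
      have hsinv := hc s hs
      have hφinv : φ ∘ T cdir = φ := by
        funext x
        by_cases hx : x ∈ s
        · have hx' : T cdir x ∈ s := by
            have : x ∈ T cdir ⁻¹' s := by rw [hsinv]; exact hx
            exact this
          simp [hφ, hx, hx']
        · have hx' : ¬ T cdir x ∈ s := by
            intro hmem
            have : x ∈ T cdir ⁻¹' s := hmem
            rw [hsinv] at this
            exact hx this
          simp [hφ, hx, hx']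
      have h4 := h3 φ hφm ⟨1, hφb⟩ hφinv
      have h5 : ∀ f : X → ℝ, ∫ x, φ x * f x ∂μ = ∫ x in s, f x ∂μ := by
        intro f
        rw [← integral_indicator hsm]
        congr 1
        funext x
        by_cases hx : x ∈ s <;> simp [hφ, hx]
      rw [h5, h5] at h4
      calc ∫ x in s, g x ∂μ = ∫ x in s, H x ∂μ :=
            integral_congr_ae (ae_restrict_of_ae hgae)
      _ = ∫ x in s, B x ∂μ := h4
    · exact StronglyMeasurable.aestronglyMeasurable (Measurable.stronglyMeasurable hgm)
  exact hgae.symm.trans hgB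

/-- A bounded, literally invariant version of the conditional expectation. -/
lemma trunc_version {a b : ℤ × ℤ} {f : X → ℝ} {cf : ℝ} (hfb : ∀ x, |f x| ≤ cf) :
    ∃ g : X → ℝ, Measurable[jointInvAlg T a b] g ∧ (∀ x, |g x| ≤ max cf 0) ∧
      g =ᵐ[μ] μ[f | jointInvAlg T a b] := by
  set M : ℝ := max cf 0 with hM
  have hM0 : 0 ≤ M := le_max_right _ _
  set g : X → ℝ := fun x => max (-M) (min M ((μ[f | jointInvAlg T a b]) x)) with hg
  refine ⟨g, ?_, ?_, ?_⟩
  · have h1 : Measurable[jointInvAlg T a b] (μ[f | jointInvAlg T a b]) :=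
      stronglyMeasurable_condExp.measurable
    exact measurable_const.max (measurable_const.min h1)
  · intro x
    rw [abs_le]
    constructor
    · exact neg_le_of_neg_le (by
        have := le_max_left (-M) (min M ((μ[f | jointInvAlg T a b]) x))
        linarith)
    · exact max_le (by linarith) (min_le_left _ _)
  · have hbdd : ∀ᵐ x ∂μ, |(μ[f | jointInvAlg T a b]) x| ≤ (⟨M, hM0⟩ : NNReal) := by
      apply ae_bdd_condExp_of_ae_bdd
      exact Filter.Eventually.of_forall fun x => le_trans (hfb x) (le_max_left _ _)
    filter_upwards [hbdd] with x hx
    have hx' : |(μ[f | jointInvAlg T a b]) x| ≤ M := hx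
    rw [abs_le] at hx'
    rw [hg]
    simp only
    rw [min_eq_right hx'.2, max_eq_right hx'.1]

end prob
end SubchAux


open SubchAux

/-- **Proposition (joint distribution of the subcharacteristic isotropy factors).**
Under the Furstenberg self-joining `μ^F` of a `ℤ²`-system for three directions in general
position, the factors `ζ₀^{T^{p₁}=T^{p₂}}∘π₁`, `ζ₀^{T^{p₁}=T^{p₃}}∘π₃` and
`ζ₀^{T^{p₂}=T^{p₃}}∘π₂` are relatively independent over `ζ₀^{T^{p₁}=T^{p₂}=T^{p₃}}`,
and each `ζ₀^{T^{pᵢ}=T^{pⱼ}}∘πᵢ` agrees with `ζ₀^{T^{pᵢ}=T^{pⱼ}}∘πⱼ` modulo `μ^F`. -/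
theorem subcharacteristic_factors_relatively_independent
    {X : Type} [MeasurableSpace X] [StandardBorelSpace X]
    (μ : Measure X) [IsProbabilityMeasure μ]
    (T : ℤ × ℤ → X → X) (hT : IsMPAction μ T)
    (p₁ p₂ p₃ : ℤ × ℤ) (hgen : GeneralPosition p₁ p₂ p₃)
    (μF : Measure (X × X × X)) [IsProbabilityMeasure μF]
    (hμF : ∀ f₁ f₂ f₃ : X → ℝ,
      Measurable f₁ → Measurable f₂ → Measurable f₃ →
      (∃ c : ℝ, ∀ x, |f₁ x| ≤ c) → (∃ c : ℝ, ∀ x, |f₂ x| ≤ c) → (∃ c : ℝ, ∀ x, |f₃ x| ≤ c) →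
      Tendsto (fun N : ℕ => (N : ℝ)⁻¹ * ∑ n ∈ Finset.Icc 1 N,
          ∫ x, f₁ (T ((n : ℤ) • p₁) x) * f₂ (T ((n : ℤ) • p₂) x) * f₃ (T ((n : ℤ) • p₃) x) ∂μ)
        atTop (nhds (∫ w, f₁ w.1 * f₂ w.2.1 * f₃ w.2.2 ∂μF))) :
    (∀ f₁₂ f₁₃ f₂₃ : X → ℝ,
      Measurable f₁₂ → Measurable f₁₃ → Measurable f₂₃ →
      (∃ c : ℝ, ∀ x, |f₁₂ x| ≤ c) → (∃ c : ℝ, ∀ x, |f₁₃ x| ≤ c) → (∃ c : ℝ, ∀ x, |f₂₃ x| ≤ c) →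
      f₁₂ ∘ T (p₁ - p₂) = f₁₂ → f₁₃ ∘ T (p₁ - p₃) = f₁₃ → f₂₃ ∘ T (p₂ - p₃) = f₂₃ →
      ∫ w, f₁₂ w.1 * f₁₃ w.2.2 * f₂₃ w.2.1 ∂μF =
        ∫ w, (μ[f₁₂|jointInvAlg T (p₁ - p₂) (p₁ - p₃)]) w.1 *
          (μ[f₁₃|jointInvAlg T (p₁ - p₂) (p₁ - p₃)]) w.2.2 *
          (μ[f₂₃|jointInvAlg T (p₁ - p₂) (p₁ - p₃)]) w.2.1 ∂μF) ∧
    (∀ f : X → ℝ, Measurable f → (∃ c : ℝ, ∀ x, |f x| ≤ c) →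
      (f ∘ T (p₁ - p₂) = f → ∀ᵐ w ∂μF, f w.1 = f w.2.1) ∧
      (f ∘ T (p₁ - p₃) = f → ∀ᵐ w ∂μF, f w.1 = f w.2.2) ∧
      (f ∘ T (p₂ - p₃) = f → ∀ᵐ w ∂μF, f w.2.1 = f w.2.2)) := by
  classical
  have hne : Nonempty X := by
    by_contra h
    have hE : IsEmpty X := not_nonempty_iff.1 h
    have : μ = 0 := μ.eq_zero_of_isEmpty
    exact (IsProbabilityMeasure.ne_zero μ) this
  -- generic : limits of constant sequences
  have hconst : ∀ f₁ f₂ f₃ : X → ℝ, Measurable f₁ → Measurable f₂ → Measurable f₃ →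
      (∃ c : ℝ, ∀ x, |f₁ x| ≤ c) → (∃ c : ℝ, ∀ x, |f₂ x| ≤ c) → (∃ c : ℝ, ∀ x, |f₃ x| ≤ c) →
      ∀ r : ℝ, (∀ n : ℕ,
        ∫ x, f₁ (T ((n : ℤ) • p₁) x) * f₂ (T ((n : ℤ) • p₂) x) * f₃ (T ((n : ℤ) • p₃) x) ∂μ = r) →
      ∫ w, f₁ w.1 * f₂ w.2.1 * f₃ w.2.2 ∂μF = r := by
    intro f₁ f₂ f₃ h1 h2 h3 b1 b2 b3 r hr
    exact tendsto_nhds_unique (hμF f₁ f₂ f₃ h1 h2 h3 b1 b2 b3)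
      (avg_const_tendsto r _ fun n _ => hr n)
  -- shifting between directions using invariance
  have hshift : ∀ (g : X → ℝ) (u v : ℤ × ℤ), g ∘ T (u - v) = g → ∀ (n : ℕ) (x : X),
      g (T ((n : ℤ) • u) x) = g (T ((n : ℤ) • v) x) := by
    intro g u v hg n x
    have h := congrFun (inv_zsmul hT hg (n : ℤ)) (T ((n : ℤ) • v) x)
    simp only [Function.comp_apply] at h
    rw [Tapp hT] at h
    have e : (n : ℤ) • (u - v) + (n : ℤ) • v = (n : ℤ) • u := by
      rw [← smul_add]
      congr 1
      abel
    rw [e] at h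
    exact h
  have hsplit : ∀ (u v : ℤ × ℤ) (n : ℕ) (x : X),
      T ((n : ℤ) • u) x = T ((n : ℤ) • (u - v)) (T ((n : ℤ) • v) x) := by
    intro u v n x
    rw [Tapp hT, ← smul_add]
    congr 2
    abel
  -- second-moment criterion for a.e. equality under μF
  have hdiff : ∀ (r : ℝ) (u v : (X × X × X) → ℝ), Measurable u → Measurable v →
      (∃ c : ℝ, ∀ w, |u w| ≤ c) → (∃ c : ℝ, ∀ w, |v w| ≤ c) →
      ∫ w, u w * u w ∂μF = r → ∫ w, v w * v w ∂μF = r → ∫ w, u w * v w ∂μF = r →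
      ∀ᵐ w ∂μF, u w = v w := by
    rintro r u v hum hvm ⟨cu, hub⟩ ⟨cv, hvb⟩ huu hvv huv
    have hcu0 : 0 ≤ cu := le_trans (abs_nonneg _) (hub Classical.ofNonempty)
    have hcv0 : 0 ≤ cv := le_trans (abs_nonneg _) (hvb Classical.ofNonempty)
    have huui : Integrable (fun w => u w * u w) μF :=
      int_bdd_gen (hum.mul hum) (c := cu * cu) fun w => by
        rw [abs_mul]; exact mul_le_mul (hub w) (hub w) (abs_nonneg _) hcu0
    have hvvi : Integrable (fun w => v w * v w) μF :=
      int_bdd_gen (hvm.mul hvm) (c := cv * cv) fun w => by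
        rw [abs_mul]; exact mul_le_mul (hvb w) (hvb w) (abs_nonneg _) hcv0
    have huvi : Integrable (fun w => u w * v w) μF :=
      int_bdd_gen (hum.mul hvm) (c := cu * cv) fun w => by
        rw [abs_mul]; exact mul_le_mul (hub w) (hvb w) (abs_nonneg _) hcu0
    have hzero : ∫ w, (u w - v w) ^ 2 ∂μF = 0 := by
      have he : (fun w => (u w - v w) ^ 2)
          = fun w => u w * u w - 2 * (u w * v w) + v w * v w := by
        funext w
        ring
      have hsub : Integrable (fun w => u w * u w - 2 * (u w * v w)) μF :=
        huui.sub (huvi.const_mul 2)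
      rw [he, integral_add hsub hvvi, integral_sub huui (huvi.const_mul 2),
        integral_const_mul, huu, hvv, huv]
      ring
    have hint : Integrable (fun w => (u w - v w) ^ 2) μF := by
      apply int_bdd_gen ((hum.sub hvm).pow_const 2) (c := (cu + cv) ^ 2)
      intro w
      have h1 : |u w - v w| ≤ cu + cv :=
        le_trans (abs_sub _ _) (add_le_add (hub w) (hvb w))
      calc |(u w - v w) ^ 2| = |u w - v w| ^ 2 := by
            rw [abs_of_nonneg (sq_nonneg _), sq_abs]
      _ ≤ (cu + cv) ^ 2 := pow_le_pow_left₀ (abs_nonneg _) h1 2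
    have hae := (integral_eq_zero_iff_of_nonneg (fun w => sq_nonneg (u w - v w)) hint).1 hzero
    filter_upwards [hae] with w hw
    have : (u w - v w) ^ 2 = 0 := hw
    have := pow_eq_zero_iff (n := 2) (by norm_num) |>.1 this
    linarith [this]
  -- null sets of μ pull back to null sets of each coordinate of μF
  have hnull : ∀ s : Set X, MeasurableSet s → μ s = 0 →
      (∀ᵐ w ∂μF, w.1 ∉ s) ∧ (∀ᵐ w ∂μF, w.2.1 ∉ s) ∧ (∀ᵐ w ∂μF, w.2.2 ∉ s) := by
    intro s hsm hs0
    set χ : X → ℝ := s.indicator (fun _ => 1) with hχ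
    have hχm : Measurable χ := measurable_const.indicator hsm
    have hχb : ∀ x, |χ x| ≤ 1 := fun x => by
      by_cases hx : x ∈ s <;> simp [hχ, hx]
    have hχnn : ∀ x, 0 ≤ χ x := fun x => by
      by_cases hx : x ∈ s <;> simp [hχ, hx]
    have hχint : ∫ x, χ x ∂μ = 0 := by
      rw [hχ, integral_indicator_const _ hsm, measureReal_def, hs0]
      simp
    have hone : ∀ x : X, |(fun _ : X => (1 : ℝ)) x| ≤ 1 := fun x => by norm_num
    have key : ∀ F : (X × X × X) → X, Measurable F → (∫ w, χ (F w) ∂μF = 0) →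
        ∀ᵐ w ∂μF, F w ∉ s := by
      intro F hFm hF0
      have hint : Integrable (fun w => χ (F w)) μF :=
        int_bdd_gen (hχm.comp hFm) fun w => hχb _
      have hae := (integral_eq_zero_iff_of_nonneg (fun w => hχnn (F w)) hint).1 hF0
      filter_upwards [hae] with w hw hmem
      have h1 : χ (F w) = 1 := by simp [hχ, hmem]
      have h0 : χ (F w) = 0 := hw
      rw [h0] at h1
      norm_num at h1
    refine ⟨?_, ?_, ?_⟩
    · apply key _ measurable_fst
      have h := hconst χ (fun _ => 1) (fun _ => 1) hχm measurable_const measurable_const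
        ⟨1, hχb⟩ ⟨1, hone⟩ ⟨1, hone⟩ 0 ?_
      · simpa using h
      · intro n
        have he : (fun x => χ (T ((n : ℤ) • p₁) x) * 1 * 1)
            = fun x => χ (T ((n : ℤ) • p₁) x) := by
          funext x
          ring
        calc ∫ x, χ (T ((n : ℤ) • p₁) x) * 1 * 1 ∂μ
            = ∫ x, χ (T ((n : ℤ) • p₁) x) ∂μ := by rw [he]
        _ = ∫ x, χ x ∂μ := integral_comp_T hT ((n : ℤ) • p₁) χ
        _ = 0 := hχint
    · apply key _ (measurable_fst.comp measurable_snd)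
      have h := hconst (fun _ => 1) χ (fun _ => 1) measurable_const hχm measurable_const
        ⟨1, hone⟩ ⟨1, hχb⟩ ⟨1, hone⟩ 0 ?_
      · simpa using h
      · intro n
        have he : (fun x => (1 : ℝ) * χ (T ((n : ℤ) • p₂) x) * 1)
            = fun x => χ (T ((n : ℤ) • p₂) x) := by
          funext x
          ring
        calc ∫ x, (1 : ℝ) * χ (T ((n : ℤ) • p₂) x) * 1 ∂μ
            = ∫ x, χ (T ((n : ℤ) • p₂) x) ∂μ := by rw [he]
        _ = ∫ x, χ x ∂μ := integral_comp_T hT ((n : ℤ) • p₂) χ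
        _ = 0 := hχint
    · apply key _ (measurable_snd.comp measurable_snd)
      have h := hconst (fun _ => 1) (fun _ => 1) χ measurable_const measurable_const hχm
        ⟨1, hone⟩ ⟨1, hone⟩ ⟨1, hχb⟩ 0 ?_
      · simpa using h
      · intro n
        have he : (fun x => (1 : ℝ) * 1 * χ (T ((n : ℤ) • p₃) x))
            = fun x => χ (T ((n : ℤ) • p₃) x) := by
          funext x
          ring
        calc ∫ x, (1 : ℝ) * 1 * χ (T ((n : ℤ) • p₃) x) ∂μ
            = ∫ x, χ (T ((n : ℤ) • p₃) x) ∂μ := by rw [he]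
        _ = ∫ x, χ x ∂μ := integral_comp_T hT ((n : ℤ) • p₃) χ
        _ = 0 := hχint
  -- μ-a.e. equal functions compose equally with each μF coordinate
  have htrans : ∀ u v : X → ℝ, Measurable u → Measurable v → u =ᵐ[μ] v →
      ((fun w : X × X × X => u w.1) =ᵐ[μF] fun w => v w.1) ∧
      ((fun w : X × X × X => u w.2.1) =ᵐ[μF] fun w => v w.2.1) ∧
      ((fun w : X × X × X => u w.2.2) =ᵐ[μF] fun w => v w.2.2) := by
    intro u v hum hvm huv
    have hsm : MeasurableSet {x | ¬ u x = v x} := (measurableSet_eq_fun hum hvm).compl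
    have hs0 : μ {x | ¬ u x = v x} = 0 := ae_iff.1 huv
    obtain ⟨h1, h2, h3⟩ := hnull _ hsm hs0
    refine ⟨?_, ?_, ?_⟩
    · filter_upwards [h1] with w hw
      exact not_not.1 hw
    · filter_upwards [h2] with w hw
      exact not_not.1 hw
    · filter_upwards [h3] with w hw
      exact not_not.1 hw
  refine ⟨?_, ?_⟩
  · rintro f12 f13 f23 h12m h13m h23m ⟨c12, h12b⟩ ⟨c13, h13b⟩ ⟨c23, h23b⟩ h12i h13i h23i
    set a : ℤ × ℤ := p₁ - p₂ with ha
    set b : ℤ × ℤ := p₁ - p₃ with hb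
    have hc120 : 0 ≤ c12 := le_trans (abs_nonneg _) (h12b Classical.ofNonempty)
    have hc230 : 0 ≤ c23 := le_trans (abs_nonneg _) (h23b Classical.ofNonempty)
    have hab : a - b = p₃ - p₂ := by rw [ha, hb]; abel
    have hba : b - a = p₂ - p₃ := by rw [ha, hb]; abel
    have h23i' : f23 ∘ T (b - a) = f23 := by rw [hba]; exact h23i
    have h12ae : f12 ∘ T a =ᵐ[μ] f12 := Filter.Eventually.of_forall fun x => congrFun h12i x
    have h13ae : f13 ∘ T b =ᵐ[μ] f13 := Filter.Eventually.of_forall fun x => congrFun h13i x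
    have h23ae : f23 ∘ T (b - a) =ᵐ[μ] f23 := Filter.Eventually.of_forall fun x => congrFun h23i' x
    -- truncated versions of the three conditional expectations
    obtain ⟨g12, hg12m, hg12b, hg12ae⟩ := trunc_version (μ := μ) (T := T) (a := a) (b := b) h12b
    obtain ⟨g13, hg13m, hg13b, hg13ae⟩ := trunc_version (μ := μ) (T := T) (a := a) (b := b) h13b
    obtain ⟨g23, hg23m, hg23b, hg23ae⟩ := trunc_version (μ := μ) (T := T) (a := a) (b := b) h23b
    have hg12M : Measurable g12 := hg12m.mono joint_le le_rfl
    have hg13M : Measurable g13 := hg13m.mono joint_le le_rfl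
    have hg23M : Measurable g23 := hg23m.mono joint_le le_rfl
    have hg12a : g12 ∘ T a = g12 := comp_eq_of_meas hg12m fun s hs => joint_inv_a hT hs
    have hg13ab : g13 ∘ T (a - b) = g13 := comp_eq_of_meas hg13m fun s hs => joint_inv_sub hT hs
    have hg13ba : g13 ∘ T (b - a) = g13 := comp_eq_of_meas hg13m fun s hs => joint_inv_sub' hT hs
    have hg13a : g13 ∘ T a = g13 := comp_eq_of_meas hg13m fun s hs => joint_inv_a hT hs
    -- Step 1 : project f13 in the direction a - b
    obtain ⟨H1, hH1m, hH1int, hH1c, hH1d, hH1tend, hH1test⟩ :=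
      core hT (a - b) b h13m h13b h13ae
    have hH1a : H1 ∘ T a =ᵐ[μ] H1 := by
      have h := ae_inv_add hT hH1c hH1d
      rwa [show a - b + b = a from by abel] at h
    have hH1J : H1 =ᵐ[μ] μ[f13 | jointInvAlg T a b] :=
      ident hT (fun s hs => joint_inv_sub hT hs) h13m h13b hH1m hH1int hH1a hH1d hH1test
    have hg13H1 : g13 =ᵐ[μ] H1 := hg13ae.trans hH1J.symm
    -- LHS of the proposition
    have hA1m : Measurable fun x : X => f12 x * f23 x := h12m.mul h23m
    have hA1b : ∀ x, |f12 x * f23 x| ≤ c12 * c23 := fun x => by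
      rw [abs_mul]
      exact mul_le_mul (h12b x) (h23b x) (abs_nonneg _) hc120
    have hLHS : ∫ w, f12 w.1 * f23 w.2.1 * f13 w.2.2 ∂μF
        = ∫ x, (f12 x * f23 x) * H1 x ∂μ := by
      refine tendsto_nhds_unique
        (hμF f12 f23 f13 h12m h23m h13m ⟨_, h12b⟩ ⟨_, h23b⟩ ⟨_, h13b⟩) ?_
      have h := hH1tend (fun x => f12 x * f23 x) hA1m ⟨_, hA1b⟩
      apply h.congr
      intro N
      congr 1
      apply Finset.sum_congr rfl
      intro n _
      have e1 := hshift f12 p₁ p₂ (by rw [← ha]; exact h12i) n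
      calc ∫ x, (f12 x * f23 x) * f13 (T ((n : ℤ) • (a - b)) x) ∂μ
          = ∫ x, (fun y => (f12 y * f23 y) * f13 (T ((n : ℤ) • (a - b)) y))
              (T ((n : ℤ) • p₂) x) ∂μ := (integral_comp_T hT _ _).symm
      _ = ∫ x, f12 (T ((n : ℤ) • p₁) x) * f23 (T ((n : ℤ) • p₂) x)
              * f13 (T ((n : ℤ) • p₃) x) ∂μ := by
          congr 1
          funext x
          have e2 : f13 (T ((n : ℤ) • (a - b)) (T ((n : ℤ) • p₂) x))
              = f13 (T ((n : ℤ) • p₃) x) := by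
            rw [hab, ← hsplit p₃ p₂ n x]
          simp only
          rw [e2, e1 x]
    have hL2 : ∫ x, (f12 x * f23 x) * H1 x ∂μ = ∫ x, (f12 x * f23 x) * g13 x ∂μ :=
      integral_congr_ae (by filter_upwards [hg13H1] with x hx; rw [hx])
    -- Step 2 : project f12 in the direction b - a
    obtain ⟨H2, hH2m, hH2int, hH2c, hH2d, hH2tend, hH2test⟩ :=
      core hT (b - a) a h12m h12b h12ae
    have hH2b : H2 ∘ T b =ᵐ[μ] H2 := by
      have h := ae_inv_add hT hH2c hH2d
      rwa [show b - a + a = b from by abel] at h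
    have hH2J : H2 =ᵐ[μ] μ[f12 | jointInvAlg T a b] :=
      ident hT (fun s hs => joint_inv_sub' hT hs) h12m h12b hH2m hH2int hH2d hH2b hH2test
    have hg12H2 : g12 =ᵐ[μ] H2 := hg12ae.trans hH2J.symm
    have hA2m : Measurable fun x : X => f23 x * g13 x := h23m.mul hg13M
    have hA2b : ∀ x, |f23 x * g13 x| ≤ c23 * max c13 0 := fun x => by
      rw [abs_mul]
      exact mul_le_mul (h23b x) (hg13b x) (abs_nonneg _) hc230
    have hA2inv : (fun x => f23 x * g13 x) ∘ T (b - a) = fun x => f23 x * g13 x := by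
      funext x
      simp only [Function.comp_apply]
      have hx1 := congrFun h23i' x
      have hx2 := congrFun hg13ba x
      simp only [Function.comp_apply] at hx1 hx2
      rw [hx1, hx2]
    have hstep2 : ∫ x, (f23 x * g13 x) * f12 x ∂μ = ∫ x, (f23 x * g13 x) * H2 x ∂μ := by
      refine tendsto_nhds_unique (avg_const_tendsto _ _ ?_)
        (hH2tend (fun x => f23 x * g13 x) hA2m ⟨_, hA2b⟩)
      intro n _
      have hA2n := inv_zsmul hT hA2inv (n : ℤ)
      calc ∫ x, (f23 x * g13 x) * f12 (T ((n : ℤ) • (b - a)) x) ∂μ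
          = ∫ x, (fun y => (f23 y * g13 y) * f12 y) (T ((n : ℤ) • (b - a)) x) ∂μ := by
            congr 1
            funext x
            simp only
            rw [← congrFun hA2n x]
            rfl
      _ = ∫ x, (f23 x * g13 x) * f12 x ∂μ :=
            integral_comp_T hT ((n : ℤ) • (b - a)) (fun y => (f23 y * g13 y) * f12 y)
    have hL4 : ∫ x, (f23 x * g13 x) * H2 x ∂μ = ∫ x, (f23 x * g13 x) * g12 x ∂μ :=
      integral_congr_ae (by filter_upwards [hg12H2] with x hx; rw [hx])
    -- Step 3 : project f23 in the direction a
    obtain ⟨H3, hH3m, hH3int, hH3c, hH3d, hH3tend, hH3test⟩ :=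
      core hT a (b - a) h23m h23b h23ae
    have hH3b : H3 ∘ T b =ᵐ[μ] H3 := by
      have h := ae_inv_add hT hH3c hH3d
      rwa [show a + (b - a) = b from by abel] at h
    have hH3J : H3 =ᵐ[μ] μ[f23 | jointInvAlg T a b] :=
      ident hT (fun s hs => joint_inv_a hT hs) h23m h23b hH3m hH3int hH3c hH3b hH3test
    have hg23H3 : g23 =ᵐ[μ] H3 := hg23ae.trans hH3J.symm
    have hA3m : Measurable fun x : X => g12 x * g13 x := hg12M.mul hg13M
    have hA3b : ∀ x, |g12 x * g13 x| ≤ max c12 0 * max c13 0 := fun x => by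
      rw [abs_mul]
      exact mul_le_mul (hg12b x) (hg13b x) (abs_nonneg _) (le_max_right _ _)
    have hA3inv : (fun x => g12 x * g13 x) ∘ T a = fun x => g12 x * g13 x := by
      funext x
      simp only [Function.comp_apply]
      have hx1 := congrFun hg12a x
      have hx2 := congrFun hg13a x
      simp only [Function.comp_apply] at hx1 hx2
      rw [hx1, hx2]
    have hstep3 : ∫ x, (g12 x * g13 x) * f23 x ∂μ = ∫ x, (g12 x * g13 x) * H3 x ∂μ := by
      refine tendsto_nhds_unique (avg_const_tendsto _ _ ?_)
        (hH3tend (fun x => g12 x * g13 x) hA3m ⟨_, hA3b⟩)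
      intro n _
      have hA3n := inv_zsmul hT hA3inv (n : ℤ)
      calc ∫ x, (g12 x * g13 x) * f23 (T ((n : ℤ) • a) x) ∂μ
          = ∫ x, (fun y => (g12 y * g13 y) * f23 y) (T ((n : ℤ) • a) x) ∂μ := by
            congr 1
            funext x
            simp only
            rw [← congrFun hA3n x]
            rfl
      _ = ∫ x, (g12 x * g13 x) * f23 x ∂μ :=
            integral_comp_T hT ((n : ℤ) • a) (fun y => (g12 y * g13 y) * f23 y)
    have hL6 : ∫ x, (g12 x * g13 x) * H3 x ∂μ = ∫ x, (g12 x * g13 x) * g23 x ∂μ :=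
      integral_congr_ae (by filter_upwards [hg23H3] with x hx; rw [hx])
    -- evaluation of the right-hand side of the proposition
    have hRHSint : ∫ w, g12 w.1 * g23 w.2.1 * g13 w.2.2 ∂μF
        = ∫ x, g12 x * g23 x * g13 x ∂μ := by
      apply hconst g12 g23 g13 hg12M hg23M hg13M ⟨_, hg12b⟩ ⟨_, hg23b⟩ ⟨_, hg13b⟩
      intro n
      have e1 := hshift g12 p₁ p₂ (by rw [← ha]; exact hg12a) n
      have e3 := hshift g13 p₃ p₂ (by rw [← hab]; exact hg13ab) n
      calc ∫ x, g12 (T ((n : ℤ) • p₁) x) * g23 (T ((n : ℤ) • p₂) x)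
              * g13 (T ((n : ℤ) • p₃) x) ∂μ
          = ∫ x, (fun y => g12 y * g23 y * g13 y) (T ((n : ℤ) • p₂) x) ∂μ := by
            congr 1
            funext x
            simp only
            rw [e1 x, e3 x]
      _ = ∫ x, g12 x * g23 x * g13 x ∂μ :=
            integral_comp_T hT ((n : ℤ) • p₂) (fun y => g12 y * g23 y * g13 y)
    -- replace conditional expectations by their truncated versions under μF
    have hcem : ∀ f : X → ℝ, Measurable (μ[f | jointInvAlg T a b]) :=
      fun f => stronglyMeasurable_condExp.measurable.mono joint_le le_rfl
    obtain ⟨e121, e122, e123⟩ := htrans g12 _ hg12M (hcem f12) hg12ae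
    obtain ⟨e131, e132, e133⟩ := htrans g13 _ hg13M (hcem f13) hg13ae
    obtain ⟨e231, e232, e233⟩ := htrans g23 _ hg23M (hcem f23) hg23ae
    have hRHS2 : ∫ w, (μ[f12 | jointInvAlg T a b]) w.1 * (μ[f13 | jointInvAlg T a b]) w.2.2
          * (μ[f23 | jointInvAlg T a b]) w.2.1 ∂μF
        = ∫ w, g12 w.1 * g13 w.2.2 * g23 w.2.1 ∂μF := by
      apply integral_congr_ae
      filter_upwards [e121, e133, e232] with w h1 h2 h3
      rw [← h1, ← h2, ← h3]
    calc ∫ w, f12 w.1 * f13 w.2.2 * f23 w.2.1 ∂μF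
        = ∫ w, f12 w.1 * f23 w.2.1 * f13 w.2.2 ∂μF :=
          integral_congr_ae (Filter.Eventually.of_forall fun w => by ring)
    _ = ∫ x, (f12 x * f23 x) * H1 x ∂μ := hLHS
    _ = ∫ x, (f12 x * f23 x) * g13 x ∂μ := hL2
    _ = ∫ x, (f23 x * g13 x) * f12 x ∂μ :=
          integral_congr_ae (Filter.Eventually.of_forall fun x => by ring)
    _ = ∫ x, (f23 x * g13 x) * H2 x ∂μ := hstep2
    _ = ∫ x, (f23 x * g13 x) * g12 x ∂μ := hL4
    _ = ∫ x, (g12 x * g13 x) * f23 x ∂μ :=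
          integral_congr_ae (Filter.Eventually.of_forall fun x => by ring)
    _ = ∫ x, (g12 x * g13 x) * H3 x ∂μ := hstep3
    _ = ∫ x, (g12 x * g13 x) * g23 x ∂μ := hL6
    _ = ∫ x, g12 x * g23 x * g13 x ∂μ :=
          integral_congr_ae (Filter.Eventually.of_forall fun x => by ring)
    _ = ∫ w, g12 w.1 * g23 w.2.1 * g13 w.2.2 ∂μF := hRHSint.symm
    _ = ∫ w, g12 w.1 * g13 w.2.2 * g23 w.2.1 ∂μF :=
          integral_congr_ae (Filter.Eventually.of_forall fun w => by ring)
    _ = ∫ w, (μ[f12 | jointInvAlg T a b]) w.1 * (μ[f13 | jointInvAlg T a b]) w.2.2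
          * (μ[f23 | jointInvAlg T a b]) w.2.1 ∂μF := hRHS2.symm
  · rintro f hfm ⟨cf, hfb⟩
    have hcf0 : 0 ≤ cf := le_trans (abs_nonneg _) (hfb Classical.ofNonempty)
    have hf2m : Measurable fun x : X => f x * f x := hfm.mul hfm
    have hf2b : ∀ x, |f x * f x| ≤ cf * cf := fun x => by
      rw [abs_mul]; exact mul_le_mul (hfb x) (hfb x) (abs_nonneg _) hcf0
    have hone : ∀ x : X, |(fun _ : X => (1 : ℝ)) x| ≤ 1 := fun x => by norm_num
    set r := ∫ x, f x * f x ∂μ with hr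
    -- square moments in each slot
    have hsq : ∀ (q : ℤ × ℤ) (n : ℕ) (g : X → ℝ),
        (fun x => g (T ((n : ℤ) • q) x)) = fun x => g (T ((n : ℤ) • q) x) := fun _ _ _ => rfl
    have hsq1 : ∫ w, f w.1 * f w.1 ∂μF = r := by
      have h := hconst (fun x => f x * f x) (fun _ => 1) (fun _ => 1) hf2m measurable_const
        measurable_const ⟨_, hf2b⟩ ⟨1, hone⟩ ⟨1, hone⟩ r ?_
      · simpa using h
      · intro n
        have he : (fun x => (f (T ((n : ℤ) • p₁) x) * f (T ((n : ℤ) • p₁) x)) * 1 * 1)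
            = fun x => (fun y => f y * f y) (T ((n : ℤ) • p₁) x) := by
          funext x
          ring
        calc ∫ x, (f (T ((n : ℤ) • p₁) x) * f (T ((n : ℤ) • p₁) x)) * 1 * 1 ∂μ
            = ∫ x, (fun y => f y * f y) (T ((n : ℤ) • p₁) x) ∂μ := by rw [he]
        _ = ∫ x, f x * f x ∂μ := integral_comp_T hT ((n : ℤ) • p₁) (fun y => f y * f y)
        _ = r := hr.symm
    have hsq2 : ∫ w, f w.2.1 * f w.2.1 ∂μF = r := by
      have h := hconst (fun _ => 1) (fun x => f x * f x) (fun _ => 1) measurable_const hf2m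
        measurable_const ⟨1, hone⟩ ⟨_, hf2b⟩ ⟨1, hone⟩ r ?_
      · simpa using h
      · intro n
        have he : (fun x => (1 : ℝ) * (f (T ((n : ℤ) • p₂) x) * f (T ((n : ℤ) • p₂) x)) * 1)
            = fun x => (fun y => f y * f y) (T ((n : ℤ) • p₂) x) := by
          funext x
          ring
        calc ∫ x, (1 : ℝ) * (f (T ((n : ℤ) • p₂) x) * f (T ((n : ℤ) • p₂) x)) * 1 ∂μ
            = ∫ x, (fun y => f y * f y) (T ((n : ℤ) • p₂) x) ∂μ := by rw [he]
        _ = ∫ x, f x * f x ∂μ := integral_comp_T hT ((n : ℤ) • p₂) (fun y => f y * f y)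
        _ = r := hr.symm
    have hsq3 : ∫ w, f w.2.2 * f w.2.2 ∂μF = r := by
      have h := hconst (fun _ => 1) (fun _ => 1) (fun x => f x * f x) measurable_const
        measurable_const hf2m ⟨1, hone⟩ ⟨1, hone⟩ ⟨_, hf2b⟩ r ?_
      · simpa using h
      · intro n
        have he : (fun x => (1 : ℝ) * 1 * (f (T ((n : ℤ) • p₃) x) * f (T ((n : ℤ) • p₃) x)))
            = fun x => (fun y => f y * f y) (T ((n : ℤ) • p₃) x) := by
          funext x
          ring
        calc ∫ x, (1 : ℝ) * 1 * (f (T ((n : ℤ) • p₃) x) * f (T ((n : ℤ) • p₃) x)) ∂μ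
            = ∫ x, (fun y => f y * f y) (T ((n : ℤ) • p₃) x) ∂μ := by rw [he]
        _ = ∫ x, f x * f x ∂μ := integral_comp_T hT ((n : ℤ) • p₃) (fun y => f y * f y)
        _ = r := hr.symm
    refine ⟨?_, ?_, ?_⟩
    · intro hfi
      apply hdiff r (fun w => f w.1) (fun w => f w.2.1) (hfm.comp measurable_fst)
        (hfm.comp (measurable_fst.comp measurable_snd)) ⟨cf, fun w => hfb _⟩
        ⟨cf, fun w => hfb _⟩ hsq1 hsq2
      have h := hconst f f (fun _ => 1) hfm hfm measurable_const ⟨cf, hfb⟩ ⟨cf, hfb⟩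
        ⟨1, hone⟩ r ?_
      · simpa using h
      · intro n
        have he : (fun x => f (T ((n : ℤ) • p₁) x) * f (T ((n : ℤ) • p₂) x) * 1)
            = fun x => (fun y => f y * f y) (T ((n : ℤ) • p₂) x) := by
          funext x
          rw [hshift f p₁ p₂ hfi n x]
          ring
        calc ∫ x, f (T ((n : ℤ) • p₁) x) * f (T ((n : ℤ) • p₂) x) * 1 ∂μ
            = ∫ x, (fun y => f y * f y) (T ((n : ℤ) • p₂) x) ∂μ := by rw [he]
        _ = ∫ x, f x * f x ∂μ := integral_comp_T hT ((n : ℤ) • p₂) (fun y => f y * f y)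
        _ = r := hr.symm
    · intro hfi
      apply hdiff r (fun w => f w.1) (fun w => f w.2.2) (hfm.comp measurable_fst)
        (hfm.comp (measurable_snd.comp measurable_snd)) ⟨cf, fun w => hfb _⟩
        ⟨cf, fun w => hfb _⟩ hsq1 hsq3
      have h := hconst f (fun _ => 1) f hfm measurable_const hfm ⟨cf, hfb⟩ ⟨1, hone⟩
        ⟨cf, hfb⟩ r ?_
      · simpa using h
      · intro n
        have he : (fun x => f (T ((n : ℤ) • p₁) x) * 1 * f (T ((n : ℤ) • p₃) x))
            = fun x => (fun y => f y * f y) (T ((n : ℤ) • p₃) x) := by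
          funext x
          rw [hshift f p₁ p₃ hfi n x]
          ring
        calc ∫ x, f (T ((n : ℤ) • p₁) x) * 1 * f (T ((n : ℤ) • p₃) x) ∂μ
            = ∫ x, (fun y => f y * f y) (T ((n : ℤ) • p₃) x) ∂μ := by rw [he]
        _ = ∫ x, f x * f x ∂μ := integral_comp_T hT ((n : ℤ) • p₃) (fun y => f y * f y)
        _ = r := hr.symm
    · intro hfi
      apply hdiff r (fun w => f w.2.1) (fun w => f w.2.2)
        (hfm.comp (measurable_fst.comp measurable_snd))
        (hfm.comp (measurable_snd.comp measurable_snd)) ⟨cf, fun w => hfb _⟩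
        ⟨cf, fun w => hfb _⟩ hsq2 hsq3
      have h := hconst (fun _ => 1) f f measurable_const hfm hfm ⟨1, hone⟩ ⟨cf, hfb⟩
        ⟨cf, hfb⟩ r ?_
      · simpa using h
      · intro n
        have he : (fun x => (1 : ℝ) * f (T ((n : ℤ) • p₂) x) * f (T ((n : ℤ) • p₃) x))
            = fun x => (fun y => f y * f y) (T ((n : ℤ) • p₃) x) := by
          funext x
          rw [hshift f p₂ p₃ hfi n x]
          ring
        calc ∫ x, (1 : ℝ) * f (T ((n : ℤ) • p₂) x) * f (T ((n : ℤ) • p₃) x) ∂μ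
            = ∫ x, (fun y => f y * f y) (T ((n : ℤ) • p₃) x) ∂μ := by rw [he]
        _ = ∫ x, f x * f x ∂μ := integral_comp_T hT ((n : ℤ) • p₃) (fun y => f y * f y)
        _ = r := hr.symm
end
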